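/- arXiv:2110.15291 — 4 statements merged into one kernel-verified Lean document; each statement's English description precedes it below -/
import Mathlib

section
/- Let (G,ω) be a vertex-weighted graph with n vertices and total weight N. Then τ_{(G,ω)}(x) = (x-1)^{N-n} τ_G(x), where τ_G is the tree polynomial of the underlying unweighted graph. In particular, the largest power of (x-1) dividing τ_{(G,ω)} is exactly N-n. -/
open Polynomial

noncomputable section
open scoped Classical

/-- The weighted chromatic symmetric function of a (vertex-weighted) finite simple graph,
as a formal power series in the variables `x_0, x_1, x_2, …`: the coefficient of a monomial
`d` is the number of proper colourings `κ : V → ℕ` such that for each colour `i`, the total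
weight of vertices coloured `i` is `d i`. -/
def wcsf {V : Type} [Fintype V] (G : SimpleGraph V) (ω : V → ℕ) : MvPowerSeries ℕ ℚ :=
  fun d => (Nat.card {κ : V → ℕ // (∀ u v, G.Adj u v → κ u ≠ κ v) ∧
    ∀ i : ℕ, ∑ v ∈ Finset.univ.filter (fun v => κ v = i), ω v = d i} : ℚ)

/-- The (unweighted) chromatic symmetric function. -/
def csf {V : Type} [Fintype V] (G : SimpleGraph V) : MvPowerSeries ℕ ℚ :=
  wcsf G (fun _ => 1)

/-- `XP μ` is the chromatic symmetric function of the disjoint union of paths whose sizes are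
given by the multiset `μ` (the chromatic symmetric function is multiplicative over disjoint
unions). -/
def XP (μ : Multiset ℕ) : MvPowerSeries ℕ ℚ :=
  (μ.map (fun m => csf (SimpleGraph.pathGraph m))).prod

/-- The power-sum symmetric function `p_n = Σ_i x_i^n`. -/
def psum (n : ℕ) : MvPowerSeries ℕ ℚ :=
  fun d => if ∃ i, d = Finsupp.single i n then 1 else 0

/-- The power-sum symmetric function `p_μ`. -/
def pp (μ : Multiset ℕ) : MvPowerSeries ℕ ℚ := (μ.map psum).prod

/-- `P` is the chromatic polynomial of `G`: `P(k)` counts proper `k`-colourings for all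
positive integers `k`. -/
def IsChromaticPoly {V : Type} [Fintype V] (G : SimpleGraph V) (P : Polynomial ℚ) : Prop :=
  ∀ k : ℕ, 0 < k → P.eval (k : ℚ) =
    Nat.card {c : V → Fin k // ∀ u v, G.Adj u v → c u ≠ c v}

/-- The polynomial `Σ_λ a_λ x^{ℓ(λ)}` built from coefficients `a` indexed by partitions of
`n`; when `a` gives the path-basis coefficients of `X_G` this is the tree polynomial `τ_G`,
and when `a` gives the power-sum coefficients it is the chromatic polynomial. -/
def basisPoly (n : ℕ) (a : n.Partition → ℚ) : Polynomial ℚ :=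
  ∑ l : n.Partition, Polynomial.C (a l) * Polynomial.X ^ l.parts.card


/-- specialization x_i = 1 for i < k, extracting total degree M part -/
def Ek (k M : ℕ) (F : MvPowerSeries ℕ ℚ) : ℚ :=
  ∑ d ∈ Finset.finsuppAntidiag (Finset.range k) M, F d

lemma Ek_mul (k M1 M2 : ℕ) (F G : MvPowerSeries ℕ ℚ)
    (hF : ∀ d : ℕ →₀ ℕ, F d ≠ 0 → d.sum (fun _ m => m) = M1) :
    Ek k (M1 + M2) (F * G) = Ek k M1 F * Ek k M2 G := by
  have hc : ∀ d : ℕ →₀ ℕ, (F * G) d =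
      ∑ p ∈ Finset.HasAntidiagonal.antidiagonal d, F p.1 * G p.2 := fun d =>
    MvPowerSeries.coeff_mul (n := d) (φ := F) (ψ := G)
  unfold Ek
  simp_rw [hc]
  rw [Finset.sum_sigma']
  erw [Finset.sum_mul_sum]
  set S := (Finset.finsuppAntidiag (Finset.range k) (M1 + M2)).sigma
      (fun d => Finset.HasAntidiagonal.antidiagonal d) with hS
  set T := (Finset.finsuppAntidiag (Finset.range k) M1) ×ˢ
      (Finset.finsuppAntidiag (Finset.range k) M2) with hT
  -- the image of T in S
  set e : (ℕ →₀ ℕ) × (ℕ →₀ ℕ) → (Σ _d : ℕ →₀ ℕ, (ℕ →₀ ℕ) × (ℕ →₀ ℕ)) :=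
    fun p => ⟨p.1 + p.2, p⟩ with he
  have hinj : ∀ p ∈ T, ∀ q ∈ T, e p = e q → p = q := by
    intro p _ q _ h
    simpa [he] using congrArg Sigma.snd h
  have hsub : T.image e ⊆ S := by
    intro x hx
    rw [Finset.mem_image] at hx
    obtain ⟨p, hp, rfl⟩ := hx
    rw [hT, Finset.mem_product] at hp
    rw [Finset.mem_finsuppAntidiag, Finset.mem_finsuppAntidiag] at hp
    obtain ⟨⟨h1, h1s⟩, ⟨h2, h2s⟩⟩ := hp
    rw [hS, Finset.mem_sigma]
    refine ⟨Finset.mem_finsuppAntidiag.2 ⟨?_, ?_⟩, ?_⟩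
    · simp only [he, Finsupp.coe_add, Pi.add_apply, Finset.sum_add_distrib, h1, h2]
    · exact (Finsupp.support_add).trans (Finset.union_subset h1s h2s)
    · simp [he, Finset.mem_antidiagonal]
  have hzero : ∀ x ∈ S, x ∉ T.image e → F x.2.1 * G x.2.2 = 0 := by
    rintro ⟨d, x2⟩ hx hnx
    set x : (Σ _d : ℕ →₀ ℕ, (ℕ →₀ ℕ) × (ℕ →₀ ℕ)) := ⟨d, x2⟩ with hxdef
    by_contra h0
    apply hnx
    have hF1 : F x.2.1 ≠ 0 := fun h => h0 (by simp [h])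
    have hG1 : G x.2.2 ≠ 0 := fun h => h0 (by simp [h])
    rw [hS, Finset.mem_sigma] at hx
    obtain ⟨hd, hp⟩ := hx
    rw [Finset.mem_finsuppAntidiag] at hd
    rw [Finset.HasAntidiagonal.mem_antidiagonal] at hp
    obtain ⟨hdsum, hdsupp⟩ := hd
    have hdi : ∀ i, d i = x.2.1 i + x.2.2 i := by
      intro i
      show x.fst i = x.2.1 i + x.2.2 i
      rw [← hp]; rfl
    have hsupp1 : x.2.1.support ⊆ Finset.range k := by
      refine Finset.Subset.trans ?_ hdsupp
      intro i hi
      rw [Finsupp.mem_support_iff] at hi ⊢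
      rw [hdi i]
      omega
    have hsupp2 : x.2.2.support ⊆ Finset.range k := by
      refine Finset.Subset.trans ?_ hdsupp
      intro i hi
      rw [Finsupp.mem_support_iff] at hi ⊢
      rw [hdi i]
      omega
    have hsum1 : ∑ i ∈ Finset.range k, x.2.1 i = M1 := by
      rw [← Finsupp.sum_of_support_subset _ hsupp1 (fun _ m => m) (fun _ _ => rfl)]
      exact hF x.2.1 hF1
    have hsum2 : ∑ i ∈ Finset.range k, x.2.2 i = M2 := by
      have : ∑ i ∈ Finset.range k, (x.2.1 i + x.2.2 i) = M1 + M2 := by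
        rw [← hdsum, ← hp]; simp
      rw [Finset.sum_add_distrib, hsum1] at this
      omega
    rw [Finset.mem_image]
    refine ⟨x.2, ?_, ?_⟩
    · rw [hT, Finset.mem_product]
      exact ⟨Finset.mem_finsuppAntidiag.2 ⟨hsum1, hsupp1⟩,
        Finset.mem_finsuppAntidiag.2 ⟨hsum2, hsupp2⟩⟩
    · show e x2 = x
      rw [hxdef, he]
      show (⟨x2.1 + x2.2, x2⟩ : Σ _d : ℕ →₀ ℕ, (ℕ →₀ ℕ) × (ℕ →₀ ℕ)) = ⟨d, x2⟩
      exact congrArg (fun y => (⟨y, x2⟩ : Σ _d : ℕ →₀ ℕ, (ℕ →₀ ℕ) × (ℕ →₀ ℕ))) hp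
  erw [← Finset.sum_subset hsub hzero]
  rw [Finset.sum_image hinj]
  rw [hT, Finset.sum_product]

lemma wcsf_homog {V : Type} [Fintype V] (G : SimpleGraph V) (ω : V → ℕ)
    (d : ℕ →₀ ℕ) (h : wcsf G ω d ≠ 0) : d.sum (fun _ m => m) = ∑ v, ω v := by
  have hne : Nonempty {κ : V → ℕ // (∀ u v, G.Adj u v → κ u ≠ κ v) ∧
      ∀ i : ℕ, ∑ v ∈ Finset.univ.filter (fun v => κ v = i), ω v = d i} := by
    by_contra hc
    rw [not_nonempty_iff] at hc
    exact h (by simp [wcsf, Nat.card_of_isEmpty])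
  obtain ⟨κ, _, hκd⟩ := hne
  set t := d.support ∪ Finset.image κ Finset.univ with ht
  have h1 : d.sum (fun _ m => m) = ∑ i ∈ t, d i := by
    exact Finsupp.sum_of_support_subset _ Finset.subset_union_left _ (fun _ _ => rfl)
  rw [h1]
  have h2 : ∀ i ∈ t, d i = ∑ v ∈ Finset.univ.filter (fun v => κ v = i), ω v :=
    fun i _ => (hκd i).symm
  rw [Finset.sum_congr rfl h2]
  exact Finset.sum_fiberwise_of_maps_to
    (fun v _ => Finset.mem_union_right _ (Finset.mem_image_of_mem κ (Finset.mem_univ v))) ω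

/-- weight distribution of a coloring -/
def wdist {V : Type} [Fintype V] (ω : V → ℕ) (κ : V → ℕ) : ℕ →₀ ℕ :=
  ∑ v, Finsupp.single (κ v) (ω v)

lemma wdist_apply {V : Type} [Fintype V] (ω : V → ℕ) (κ : V → ℕ) (i : ℕ) :
    wdist ω κ i = ∑ v ∈ Finset.univ.filter (fun v => κ v = i), ω v := by
  rw [wdist, Finset.sum_apply']
  rw [Finset.sum_filter]
  exact Finset.sum_congr rfl (fun v _ => Finsupp.single_apply)

lemma wdist_mem {V : Type} [Fintype V] (ω : V → ℕ) (k M : ℕ) (c : V → Fin k)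
    (hM : ∑ v, ω v = M) :
    wdist ω (fun v => (c v : ℕ)) ∈ Finset.finsuppAntidiag (Finset.range k) M := by
  rw [Finset.mem_finsuppAntidiag]
  constructor
  · rw [← hM]
    show ∑ i ∈ Finset.range k, (∑ v, Finsupp.single ((c v : ℕ)) (ω v)) i = _
    simp_rw [Finset.sum_apply']
    rw [Finset.sum_comm]
    refine Finset.sum_congr rfl (fun v _ => ?_)
    simp_rw [Finsupp.single_apply]
    rw [Finset.sum_ite_eq (Finset.range k) ((c v : ℕ))]
    simp [(c v).isLt]
  · refine (Finsupp.support_finset_sum).trans ?_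
    intro i hi
    rw [Finset.mem_biUnion] at hi
    obtain ⟨v, _, hv⟩ := hi
    have := Finsupp.support_single_subset hv
    rw [Finset.mem_singleton] at this
    subst this
    exact Finset.mem_range.2 (c v).isLt

lemma Ek_wcsf {V : Type} [Fintype V] (G : SimpleGraph V) (ω : V → ℕ)
    (hω : ∀ v, 0 < ω v) (k M : ℕ) (hM : ∑ v, ω v = M) :
    Ek k M (wcsf G ω) =
      (Nat.card {c : V → Fin k // ∀ u v, G.Adj u v → c u ≠ c v} : ℚ) := by
  unfold Ek wcsf
  -- rewrite each coefficient as a count of Fin k colorings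
  have step1 : ∀ d ∈ Finset.finsuppAntidiag (Finset.range k) M,
      (Nat.card {κ : V → ℕ // (∀ u v, G.Adj u v → κ u ≠ κ v) ∧
        ∀ i : ℕ, ∑ v ∈ Finset.univ.filter (fun v => κ v = i), ω v = d i} : ℚ) =
      (Nat.card {c : V → Fin k // (∀ u v, G.Adj u v → c u ≠ c v) ∧
        wdist ω (fun v => (c v : ℕ)) = d} : ℚ) := by
    intro d hd
    rw [Finset.mem_finsuppAntidiag] at hd
    congr 1
    refine Nat.card_congr (Equiv.ofBijective (fun p => ?_) ⟨?_, ?_⟩)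
    · refine ⟨fun v => ⟨p.1 v, ?_⟩, ?_, ?_⟩
      · -- κ v < k
        have h1 : ω v ≤ d (p.1 v) := by
          rw [← p.2.2 (p.1 v)]
          exact Finset.single_le_sum (fun u _ => Nat.zero_le (ω u))
            (Finset.mem_filter.2 ⟨Finset.mem_univ v, rfl⟩)
        have h2 : p.1 v ∈ d.support := by
          rw [Finsupp.mem_support_iff]
          have := hω v
          omega
        exact Finset.mem_range.1 (hd.2 h2)
      · intro u v huv h
        exact p.2.1 u v huv (by simpa using congrArg Fin.val h)
      · ext i
        rw [wdist_apply]
        exact p.2.2 i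
    · intro p q hpq
      apply Subtype.ext
      funext v
      have := congrArg (fun r => (r.1 v : ℕ)) hpq
      exact this
    · intro c
      refine ⟨⟨fun v => (c.1 v : ℕ), ?_, ?_⟩, ?_⟩
      · intro u v huv h
        exact c.2.1 u v huv (Fin.val_injective h)
      · intro i
        show ∑ v ∈ Finset.univ.filter (fun v => ((c.1 v : ℕ)) = i), ω v = d i
        rw [← wdist_apply, c.2.2]
      · apply Subtype.ext
        funext v
        rfl
  rw [Finset.sum_congr rfl step1]
  -- now sum the Fin k counts fiberwise
  have step2 : ∀ d : ℕ →₀ ℕ,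
      (Nat.card {c : V → Fin k // (∀ u v, G.Adj u v → c u ≠ c v) ∧
        wdist ω (fun v => (c v : ℕ)) = d} : ℚ) =
      ((Finset.univ.filter (fun c : V → Fin k => (∀ u v, G.Adj u v → c u ≠ c v) ∧
        wdist ω (fun v => (c v : ℕ)) = d)).card : ℚ) := by
    intro d
    rw [Nat.card_eq_fintype_card, Fintype.card_subtype]
  rw [Finset.sum_congr rfl (fun d _ => step2 d)]
  rw [Nat.card_eq_fintype_card, Fintype.card_subtype]
  rw [← Nat.cast_sum]
  congr 1
  have := Finset.card_eq_sum_card_fiberwise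
    (f := fun c : V → Fin k => wdist ω (fun v => (c v : ℕ)))
    (s := Finset.univ.filter (fun c : V → Fin k => ∀ u v, G.Adj u v → c u ≠ c v))
    (t := Finset.finsuppAntidiag (Finset.range k) M)
    (fun c _ => wdist_mem ω k M c hM)
  rw [this]
  refine Finset.sum_congr rfl (fun d _ => ?_)
  rw [Finset.filter_filter]

lemma sigma_subtype_ext {A : Type} {β : Type} (f : A → β)
    (x y : Σ c : A, {j : β // j ≠ f c}) (h1 : x.1 = y.1)
    (h2 : (x.2 : β) = (y.2 : β)) : x = y := by
  rcases x with ⟨a, j⟩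
  rcases y with ⟨b, i⟩
  cases h1
  cases Subtype.ext h2
  rfl

lemma proper_path_iff {k m : ℕ} (c : Fin m → Fin k) :
    (∀ u v, (SimpleGraph.pathGraph m).Adj u v → c u ≠ c v) ↔
      ∀ (i : ℕ) (h : i + 1 < m), c ⟨i, Nat.lt_of_succ_lt h⟩ ≠ c ⟨i + 1, h⟩ := by
  constructor
  · intro hp i h
    refine hp _ _ (SimpleGraph.pathGraph_adj.2 (Or.inl rfl))
  · intro hp u v hadj
    rcases SimpleGraph.pathGraph_adj.1 hadj with h | h
    · have h0 := hp u.val (by omega)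
      have e1 : (⟨u.val, Nat.lt_of_succ_lt (show u.val + 1 < m by omega)⟩ : Fin m) = u :=
        Fin.eta u _
      have e2 : (⟨u.val + 1, show u.val + 1 < m by omega⟩ : Fin m) = v :=
        Fin.ext (by simpa using h)
      rw [e1, e2] at h0
      exact h0
    · have h0 := hp v.val (by omega)
      have e1 : (⟨v.val, Nat.lt_of_succ_lt (show v.val + 1 < m by omega)⟩ : Fin m) = v :=
        Fin.eta v _
      have e2 : (⟨v.val + 1, show v.val + 1 < m by omega⟩ : Fin m) = u :=
        Fin.ext (by simpa using h)
      rw [e1, e2] at h0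
      exact h0.symm


lemma hto1 {k : ℕ} (p : ℕ) : ∀ (c : Fin (p + 2) → Fin k),
    (∀ u v, (SimpleGraph.pathGraph (p + 2)).Adj u v → c u ≠ c v) →
    (∀ u v, (SimpleGraph.pathGraph (p + 1)).Adj u v → Fin.init c u ≠ Fin.init c v) := by
  intro c hc
  rw [proper_path_iff]
  intro i h
  have hlt : i + 1 < p + 2 := by omega
  have := (proper_path_iff c).1 hc i hlt
  simpa [Fin.init, Fin.castSucc, Fin.castAdd, Fin.castLE] using this

lemma hto2 {k : ℕ} (p : ℕ) : ∀ (c : Fin (p + 2) → Fin k),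
    (∀ u v, (SimpleGraph.pathGraph (p + 2)).Adj u v → c u ≠ c v) →
    c (Fin.last (p + 1)) ≠ Fin.init c (Fin.last p) := by
  intro c hc
  have hlt : p + 1 < p + 2 := by omega
  have := (proper_path_iff c).1 hc p hlt
  simp only [Fin.init]
  intro hh
  apply this
  have e1 : (⟨p, Nat.lt_of_succ_lt hlt⟩ : Fin (p + 2)) =
      Fin.castSucc (Fin.last p) := Fin.ext rfl
  have e2 : (⟨p + 1, hlt⟩ : Fin (p + 2)) =
      Fin.last (p + 1) := Fin.ext rfl
  rw [e1, e2, ← hh]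

lemma hsnoc {k : ℕ} (p : ℕ) : ∀ (c' : Fin (p + 1) → Fin k) (j : Fin k),
    (∀ u v, (SimpleGraph.pathGraph (p + 1)).Adj u v → c' u ≠ c' v) →
    j ≠ c' (Fin.last p) →
    (∀ u v, (SimpleGraph.pathGraph (p + 2)).Adj u v →
      (Fin.snoc c' j : Fin (p + 2) → Fin k) u ≠ (Fin.snoc c' j : Fin (p + 2) → Fin k) v) := by
  intro c' j hc' hj
  rw [proper_path_iff]
  intro i h
  rcases Nat.lt_or_ge (i + 1) (p + 1) with h1 | h1
  · have h2 : (⟨i, Nat.lt_of_succ_lt h⟩ : Fin (p + 2)) =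
        Fin.castSucc ⟨i, Nat.lt_of_succ_lt h1⟩ := Fin.ext rfl
    have h3 : (⟨i + 1, h⟩ : Fin (p + 2)) = Fin.castSucc ⟨i + 1, h1⟩ :=
      Fin.ext rfl
    rw [h2, h3, Fin.snoc_castSucc, Fin.snoc_castSucc]
    exact (proper_path_iff c').1 hc' i h1
  · have hi : i = p := by omega
    have h2 : (⟨i, Nat.lt_of_succ_lt h⟩ : Fin (p + 2)) =
        Fin.castSucc (Fin.last p) := Fin.ext (by simp [hi, Fin.last])
    have h3 : (⟨i + 1, h⟩ : Fin (p + 2)) = Fin.last (p + 1) :=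
      Fin.ext (by simp [hi, Fin.last])
    rw [h2, h3, Fin.snoc_castSucc, Fin.snoc_last]
    exact fun hh => hj hh.symm

lemma card_path_colorings (k : ℕ) : ∀ p : ℕ,
    Nat.card {c : Fin (p + 1) → Fin k //
      ∀ u v, (SimpleGraph.pathGraph (p + 1)).Adj u v → c u ≠ c v} = k * (k - 1) ^ p := by
  intro p
  induction p with
  | zero =>
    rw [Nat.card_eq_fintype_card, pow_zero, mul_one]
    have htriv : ∀ c : Fin 1 → Fin k,
        (∀ u v, (SimpleGraph.pathGraph 1).Adj u v → c u ≠ c v) := by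
      intro c u v hadj
      rcases SimpleGraph.pathGraph_adj.1 hadj with h | h <;> omega
    rw [Fintype.card_congr (Equiv.subtypeUnivEquiv htriv)]
    rw [Fintype.card_fun]
    simp
  | succ p ih =>
    have e : {c : Fin (p + 2) → Fin k //
        ∀ u v, (SimpleGraph.pathGraph (p + 2)).Adj u v → c u ≠ c v} ≃
        Σ c' : {c : Fin (p + 1) → Fin k //
          ∀ u v, (SimpleGraph.pathGraph (p + 1)).Adj u v → c u ≠ c v},
          {j : Fin k // j ≠ c'.1 (Fin.last p)} := by
      refine ⟨fun c => ⟨⟨Fin.init c.1, hto1 p c.1 c.2⟩, ⟨c.1 (Fin.last (p + 1)), hto2 p c.1 c.2⟩⟩,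
        fun x => ⟨Fin.snoc x.1.1 x.2.1, hsnoc p x.1.1 x.2.1 x.1.2 x.2.2⟩, ?_, ?_⟩
      · intro c
        apply Subtype.ext
        exact Fin.snoc_init_self c.1
      · intro x
        refine sigma_subtype_ext
          (A := {c : Fin (p + 1) → Fin k //
            ∀ u v, (SimpleGraph.pathGraph (p + 1)).Adj u v → c u ≠ c v})
          (β := Fin k) (fun c' => c'.1 (Fin.last p)) _ _ ?_ ?_
        · apply Subtype.ext
          exact Fin.init_snoc (α := fun _ : Fin (p + 2) => Fin k) x.2.1 x.1.1
        · exact Fin.snoc_last (α := fun _ : Fin (p + 2) => Fin k) x.2.1 x.1.1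
    rw [Nat.card_congr e, Nat.card_eq_fintype_card, Fintype.card_sigma]
    have hcard : ∀ c' : {c : Fin (p + 1) → Fin k //
        ∀ u v, (SimpleGraph.pathGraph (p + 1)).Adj u v → c u ≠ c v},
        Fintype.card {j : Fin k // j ≠ c'.1 (Fin.last p)} = k - 1 := by
      intro c'
      rw [Fintype.card_subtype_compl, Fintype.card_subtype_eq, Fintype.card_fin]
    rw [Finset.sum_congr rfl (fun c' _ => hcard c')]
    rw [Finset.sum_const, Finset.card_univ, smul_eq_mul]
    rw [← Nat.card_eq_fintype_card, ih]
    ring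

/-- If `|R.eval k| * k ≤ E * k^n` for all positive naturals `k`, and `natDegree R ≤ n`,
then the coefficient of `X^n` in `R` vanishes. -/
lemma coeff_eq_zero_of_growth (R : Polynomial ℚ) (n : ℕ) (E : ℚ) (hE : 0 ≤ E)
    (hdeg : R.natDegree ≤ n)
    (hb : ∀ k : ℕ, 1 ≤ k → |R.eval (k : ℚ)| * k ≤ E * (k : ℚ) ^ n) :
    R.coeff n = 0 := by
  by_contra hc
  set c := R.coeff n with hcdef
  set S := R - Polynomial.C c * Polynomial.X ^ n with hSdef
  have hSdeg : S.natDegree ≤ n := by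
    refine le_trans (Polynomial.natDegree_sub_le _ _) ?_
    simp only [max_le_iff]
    exact ⟨hdeg, le_trans (Polynomial.natDegree_C_mul_le _ _) (by simp)⟩
  have hScoeff : S.coeff n = 0 := by
    simp [hSdef, Polynomial.coeff_X_pow]
    exact sub_eq_zero.2 hcdef.symm
  set C' := ∑ i ∈ Finset.range (n + 1), |S.coeff i| with hC'def
  have hC' : 0 ≤ C' := Finset.sum_nonneg (fun i _ => abs_nonneg _)
  have hSbound : ∀ k : ℕ, 1 ≤ k → |S.eval (k : ℚ)| * k ≤ C' * (k : ℚ) ^ n := by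
    intro k hk
    have hx1 : (1 : ℚ) ≤ (k : ℚ) := by exact_mod_cast hk
    have hx0 : (0 : ℚ) < (k : ℚ) := by positivity
    have heval : S.eval (k : ℚ) = ∑ i ∈ Finset.range (n + 1), S.coeff i * (k : ℚ) ^ i := by
      rw [Polynomial.eval_eq_sum_range' (Nat.lt_succ_of_le hSdeg)]
    rw [heval]
    calc |∑ i ∈ Finset.range (n + 1), S.coeff i * (k : ℚ) ^ i| * k
        ≤ (∑ i ∈ Finset.range (n + 1), |S.coeff i * (k : ℚ) ^ i|) * k := by
          apply mul_le_mul_of_nonneg_right (Finset.abs_sum_le_sum_abs _ _) (le_of_lt hx0)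
      _ = ∑ i ∈ Finset.range (n + 1), |S.coeff i| * (k : ℚ) ^ i * k := by
          rw [Finset.sum_mul]
          refine Finset.sum_congr rfl (fun i _ => ?_)
          rw [abs_mul, abs_pow, abs_of_pos hx0]
      _ ≤ ∑ i ∈ Finset.range (n + 1), |S.coeff i| * (k : ℚ) ^ n := by
          refine Finset.sum_le_sum (fun i hi => ?_)
          rcases Nat.lt_or_ge i n with h | h
          · rw [mul_assoc, ← pow_succ]
            exact mul_le_mul_of_nonneg_left
              (pow_le_pow_right₀ hx1 (Nat.succ_le_of_lt h)) (abs_nonneg _)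
          · have hi' : i < n + 1 := Finset.mem_range.1 hi
            have : i = n := by omega
            subst this
            rw [hScoeff]
            simp
      _ = C' * (k : ℚ) ^ n := by rw [hC'def, Finset.sum_mul]
  have key : ∀ k : ℕ, 1 ≤ k → |c| * k ≤ E + C' := by
    intro k hk
    have hx1 : (1 : ℚ) ≤ (k : ℚ) := by exact_mod_cast hk
    have hx0 : (0 : ℚ) < (k : ℚ) := by positivity
    have hxn : (0 : ℚ) < (k : ℚ) ^ n := by positivity
    have hR : R.eval (k : ℚ) = S.eval (k : ℚ) + c * (k : ℚ) ^ n := by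
      simp [hSdef]
    have h1 : |c| * (k : ℚ) ^ n * k ≤ (E + C') * (k : ℚ) ^ n := by
      have : |c * (k : ℚ) ^ n| = |R.eval (k : ℚ) - S.eval (k : ℚ)| := by rw [hR]; ring_nf
      calc |c| * (k : ℚ) ^ n * k = |c * (k : ℚ) ^ n| * k := by
            rw [abs_mul, abs_pow, abs_of_pos hx0]
        _ = |R.eval (k : ℚ) - S.eval (k : ℚ)| * k := by rw [this]
        _ ≤ (|R.eval (k : ℚ)| + |S.eval (k : ℚ)|) * k := by
            apply mul_le_mul_of_nonneg_right (abs_sub _ _) (le_of_lt hx0)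
        _ = |R.eval (k : ℚ)| * k + |S.eval (k : ℚ)| * k := by ring
        _ ≤ E * (k : ℚ) ^ n + C' * (k : ℚ) ^ n := add_le_add (hb k hk) (hSbound k hk)
        _ = (E + C') * (k : ℚ) ^ n := by ring
    have h2 : |c| * (k : ℚ) ^ n * k = |c| * k * (k : ℚ) ^ n := by ring
    rw [h2] at h1
    exact le_of_mul_le_mul_right h1 hxn
  have hcpos : 0 < |c| := abs_pos.2 hc
  obtain ⟨k, hk⟩ := exists_nat_gt ((E + C') / |c|)
  have hk1 : 1 ≤ k := by
    by_contra hk1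
    have : k = 0 := by omega
    subst this
    simp only [Nat.cast_zero] at hk
    have : 0 ≤ (E + C') / |c| := div_nonneg (by linarith) (le_of_lt hcpos)
    linarith
  have := key k hk1
  rw [← le_div_iff₀' hcpos] at this
  exact absurd (lt_of_le_of_lt this hk) (lt_irrefl _)

lemma chrom_upper {V : Type} [Fintype V] (G : SimpleGraph V) (k : ℕ) :
    Nat.card {c : V → Fin k // ∀ u v, G.Adj u v → c u ≠ c v} ≤ k ^ (Fintype.card V) := by
  rw [Nat.card_eq_fintype_card]
  calc Fintype.card {c : V → Fin k // ∀ u v, G.Adj u v → c u ≠ c v}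
      ≤ Fintype.card (V → Fin k) := Fintype.card_subtype_le _
    _ = k ^ (Fintype.card V) := by rw [Fintype.card_fun, Fintype.card_fin]

lemma pair_fiber_card {V : Type} [Fintype V] (k : ℕ) (u v : V) (huv : u ≠ v) :
    (Finset.univ.filter (fun c : V → Fin k => c u = c v)).card ≤
      k ^ (Fintype.card V - 1) := by
  have hcard : Fintype.card {w : V // ¬ w = v} = Fintype.card V - 1 := by
    rw [Fintype.card_subtype_compl, Fintype.card_subtype_eq]
  refine le_trans (Finset.card_le_card_of_injOn
    (fun c => fun w : {w : V // ¬ w = v} => c w.1) (fun c _ => Finset.mem_univ _) ?_) ?_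
  · intro c hc c' hc' hcc
    rw [Finset.mem_coe, Finset.mem_filter] at hc hc'
    funext w
    by_cases hw : w = v
    · subst hw
      have h1 : c u = c' u := congrFun hcc ⟨u, huv⟩
      rw [← hc.2, ← hc'.2]
      exact h1
    · exact congrFun hcc ⟨w, hw⟩
  · rw [Finset.card_univ, Fintype.card_fun, Fintype.card_fin, hcard]

lemma chrom_lower {V : Type} [Fintype V] (G : SimpleGraph V) (k : ℕ) :
    k ^ (Fintype.card V) ≤ Nat.card {c : V → Fin k // ∀ u v, G.Adj u v → c u ≠ c v} +
      (Fintype.card V) * (Fintype.card V) * k ^ (Fintype.card V - 1) := by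
  rw [Nat.card_eq_fintype_card, Fintype.card_subtype]
  have htot : (Finset.univ.filter (fun c : V → Fin k =>
      ∀ u v, G.Adj u v → c u ≠ c v)).card +
      (Finset.univ.filter (fun c : V → Fin k =>
        ¬ ∀ u v, G.Adj u v → c u ≠ c v)).card = k ^ (Fintype.card V) := by
    rw [Finset.card_filter_add_card_filter_not]
    rw [Finset.card_univ, Fintype.card_fun, Fintype.card_fin]
  have hbad : (Finset.univ.filter (fun c : V → Fin k =>
      ¬ ∀ u v, G.Adj u v → c u ≠ c v)).card ≤
      (Fintype.card V) * (Fintype.card V) * k ^ (Fintype.card V - 1) := by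
    have hsub : (Finset.univ.filter (fun c : V → Fin k =>
        ¬ ∀ u v, G.Adj u v → c u ≠ c v)) ⊆
        (Finset.univ.filter (fun p : V × V => G.Adj p.1 p.2)).biUnion
          (fun p => Finset.univ.filter (fun c : V → Fin k => c p.1 = c p.2)) := by
      intro c hc
      rw [Finset.mem_filter] at hc
      push_neg at hc
      obtain ⟨u, v, huv, hcc⟩ := hc.2
      rw [Finset.mem_biUnion]
      exact ⟨(u, v), Finset.mem_filter.2 ⟨Finset.mem_univ _, huv⟩,
        Finset.mem_filter.2 ⟨Finset.mem_univ _, hcc⟩⟩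
    refine le_trans (Finset.card_le_card hsub) ?_
    refine le_trans (Finset.card_biUnion_le) ?_
    calc ∑ p ∈ Finset.univ.filter (fun p : V × V => G.Adj p.1 p.2),
          (Finset.univ.filter (fun c : V → Fin k => c p.1 = c p.2)).card
        ≤ ∑ p ∈ Finset.univ.filter (fun p : V × V => G.Adj p.1 p.2),
          k ^ (Fintype.card V - 1) := by
          refine Finset.sum_le_sum (fun p hp => ?_)
          rw [Finset.mem_filter] at hp
          exact pair_fiber_card k p.1 p.2 (G.ne_of_adj hp.2)
      _ = (Finset.univ.filter (fun p : V × V => G.Adj p.1 p.2)).card *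
          k ^ (Fintype.card V - 1) := by rw [Finset.sum_const, smul_eq_mul]
      _ ≤ (Fintype.card V) * (Fintype.card V) * k ^ (Fintype.card V - 1) := by
          apply Nat.mul_le_mul_right
          refine le_trans (Finset.card_le_card (Finset.filter_subset _ _)) ?_
          rw [Finset.card_univ, Fintype.card_prod]
  rw [← htot]
  exact Nat.add_le_add_left hbad _

lemma mcard_le_sum : ∀ (μ : Multiset ℕ), (∀ m ∈ μ, 0 < m) → Multiset.card μ ≤ μ.sum := by
  intro μ
  induction μ using Multiset.induction_on with
  | empty => simp
  | cons m μ ih =>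
    intro h
    rw [Multiset.card_cons, Multiset.sum_cons]
    have h1 := h m (Multiset.mem_cons_self m μ)
    have h2 := ih (fun x hx => h x (Multiset.mem_cons_of_mem hx))
    omega

lemma csf_path_homog (m : ℕ) (d : ℕ →₀ ℕ)
    (h : csf (SimpleGraph.pathGraph m) d ≠ 0) : d.sum (fun _ x => x) = m := by
  have := wcsf_homog (SimpleGraph.pathGraph m) (fun _ => 1) d h
  simpa using this

lemma Ek_csf_path (k m : ℕ) (hk : 1 ≤ k) (hm : 1 ≤ m) :
    Ek k m (csf (SimpleGraph.pathGraph m)) = (k : ℚ) * ((k : ℚ) - 1) ^ (m - 1) := by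
  obtain ⟨p, rfl⟩ : ∃ p, m = p + 1 := ⟨m - 1, by omega⟩
  have h1 : Ek k (p + 1) (csf (SimpleGraph.pathGraph (p + 1))) =
      (Nat.card {c : Fin (p + 1) → Fin k //
        ∀ u v, (SimpleGraph.pathGraph (p + 1)).Adj u v → c u ≠ c v} : ℚ) := by
    apply Ek_wcsf (SimpleGraph.pathGraph (p + 1)) (fun _ => 1) (fun _ => Nat.one_pos)
    simp
  rw [h1, card_path_colorings k p]
  have : ((k - 1 : ℕ) : ℚ) = (k : ℚ) - 1 := by
    have := Nat.cast_sub (R := ℚ) hk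
    simpa using this
  push_cast [← this]
  simp

lemma Ek_XP (k : ℕ) (hk : 1 ≤ k) : ∀ (μ : Multiset ℕ), (∀ m ∈ μ, 0 < m) →
    Ek k μ.sum (XP μ) =
      (k : ℚ) ^ (Multiset.card μ) * ((k : ℚ) - 1) ^ (μ.sum - Multiset.card μ) := by
  intro μ
  induction μ using Multiset.induction_on with
  | empty =>
    intro _
    have hset : Finset.finsuppAntidiag (Finset.range k) 0 = {0} := by
      ext d
      rw [Finset.mem_finsuppAntidiag, Finset.mem_singleton]
      constructor
      · rintro ⟨hsum, hsupp⟩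
        ext i
        by_cases hi : i ∈ Finset.range k
        · exact Finset.sum_eq_zero_iff.1 hsum i hi
        · by_contra h0
          exact hi (hsupp (Finsupp.mem_support_iff.2 h0))
      · rintro rfl
        simp
    show Ek k 0 1 = _
    unfold Ek
    rw [hset]
    simp [MvPowerSeries.coeff_one]
    exact (Finset.sum_singleton _ _).trans (MvPowerSeries.coeff_zero_one (σ := ℕ) (R := ℚ))
  | cons m μ ih =>
    intro hpos
    have hm : 0 < m := hpos m (Multiset.mem_cons_self m μ)
    have hμ : ∀ x ∈ μ, 0 < x := fun x hx => hpos x (Multiset.mem_cons_of_mem hx)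
    have hXP : XP (m ::ₘ μ) = csf (SimpleGraph.pathGraph m) * XP μ := by
      unfold XP
      rw [Multiset.map_cons, Multiset.prod_cons]
    rw [Multiset.sum_cons, hXP]
    rw [Ek_mul k m μ.sum _ _ (csf_path_homog m)]
    rw [Ek_csf_path k m hk hm, ih hμ]
    rw [Multiset.card_cons]
    have hcs : Multiset.card μ ≤ μ.sum := mcard_le_sum μ hμ
    have e1 : m + μ.sum - (Multiset.card μ + 1) = (m - 1) + (μ.sum - Multiset.card μ) := by
      omega
    rw [e1, pow_add, pow_succ]
    ring

def PQpoly (M : ℕ) (cfs : M.Partition → ℚ) : Polynomial ℚ :=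
  ∑ l : M.Partition, Polynomial.C (cfs l) *
    (Polynomial.X ^ l.parts.card * (Polynomial.X - 1) ^ (M - l.parts.card))

lemma parts_card_le (M : ℕ) (l : M.Partition) : Multiset.card l.parts ≤ M := by
  conv_rhs => rw [← l.parts_sum]
  exact mcard_le_sum _ (fun m hm => l.parts_pos hm)

lemma PQpoly_eval (M : ℕ) (cfs : M.Partition → ℚ) (x : ℚ) :
    (PQpoly M cfs).eval x =
      ∑ l : M.Partition, cfs l * (x ^ (Multiset.card l.parts) *
        (x - 1) ^ (M - Multiset.card l.parts)) := by
  unfold PQpoly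
  rw [Polynomial.eval_finset_sum]
  exact Finset.sum_congr rfl (fun l _ => by simp)

lemma eval_identity {V : Type} [Fintype V] (G : SimpleGraph V) (ω : V → ℕ)
    (hω : ∀ v, 0 < ω v) (M : ℕ) (hM : ∑ v, ω v = M) (cfs : M.Partition → ℚ)
    (h : wcsf G ω = ∑ l : M.Partition, cfs l • XP l.parts)
    (k : ℕ) (hk : 1 ≤ k) :
    (Nat.card {c : V → Fin k // ∀ u v, G.Adj u v → c u ≠ c v} : ℚ) =
      (PQpoly M cfs).eval (k : ℚ) := by
  rw [← Ek_wcsf G ω hω k M hM, h]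
  have hcoeffsum : ∀ d : ℕ →₀ ℕ,
      (∑ l : M.Partition, cfs l • XP l.parts) d =
        ∑ l : M.Partition, cfs l * XP l.parts d := by
    intro d
    show MvPowerSeries.coeff d (∑ l : M.Partition, cfs l • XP l.parts) = _
    rw [map_sum]
    rfl
  unfold Ek
  rw [Finset.sum_congr rfl (fun d _ => hcoeffsum d)]
  rw [Finset.sum_comm]
  rw [PQpoly_eval]
  refine Finset.sum_congr rfl (fun l _ => ?_)
  erw [← Finset.mul_sum]
  congr 1
  have hgen : ∀ (μ : Multiset ℕ), (∀ m ∈ μ, 0 < m) → μ.sum = M →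
      Ek k M (XP μ) = (k : ℚ) ^ Multiset.card μ *
        ((k : ℚ) - 1) ^ (M - Multiset.card μ) := by
    intro μ hp hs
    rw [← hs]
    exact Ek_XP k hk μ hp
  exact hgen l.parts (fun m hm => l.parts_pos hm) l.parts_sum

lemma PQpoly_natDegree_le (M : ℕ) (cfs : M.Partition → ℚ) :
    (PQpoly M cfs).natDegree ≤ M := by
  unfold PQpoly
  refine Polynomial.natDegree_sum_le_of_forall_le _ _ (fun l _ => ?_)
  refine le_trans (Polynomial.natDegree_C_mul_le _ _) ?_
  refine le_trans (Polynomial.natDegree_mul_le) ?_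
  have h1 : (Polynomial.X ^ Multiset.card l.parts : Polynomial ℚ).natDegree =
      Multiset.card l.parts := Polynomial.natDegree_X_pow _
  have h2 : ((Polynomial.X - 1 : Polynomial ℚ) ^ (M - Multiset.card l.parts)).natDegree ≤
      M - Multiset.card l.parts := by
    refine le_trans (Polynomial.natDegree_pow_le) ?_
    have : (Polynomial.X - 1 : Polynomial ℚ).natDegree ≤ 1 := by
      rw [← Polynomial.C_1 (R := ℚ), Polynomial.natDegree_X_sub_C]
    exact Nat.mul_le_mul_left _ this |>.trans (by omega)
  have := parts_card_le M l
  omega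

lemma PQpoly_coeff_top (M : ℕ) (cfs : M.Partition → ℚ) :
    (PQpoly M cfs).coeff M = ∑ l : M.Partition, cfs l := by
  unfold PQpoly
  rw [Polynomial.finset_sum_coeff]
  refine Finset.sum_congr rfl (fun l _ => ?_)
  rw [Polynomial.coeff_C_mul]
  have hmon : ((Polynomial.X : Polynomial ℚ) ^ Multiset.card l.parts *
      (Polynomial.X - 1) ^ (M - Multiset.card l.parts)).Monic := by
    have hm1 : (Polynomial.X - 1 : Polynomial ℚ).Monic := by
      rw [← Polynomial.C_1 (R := ℚ)]
      exact Polynomial.monic_X_sub_C 1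
    exact (Polynomial.monic_X_pow _).mul (hm1.pow _)
  have hdeg : ((Polynomial.X : Polynomial ℚ) ^ Multiset.card l.parts *
      (Polynomial.X - 1) ^ (M - Multiset.card l.parts)).natDegree = M := by
    rw [Polynomial.Monic.natDegree_mul (Polynomial.monic_X_pow _)
      (by rw [← Polynomial.C_1 (R := ℚ)]
          exact (Polynomial.monic_X_sub_C 1).pow _)]
    rw [Polynomial.natDegree_X_pow]
    rw [show ((Polynomial.X - 1 : Polynomial ℚ) ^ (M - Multiset.card l.parts)).natDegree
      = M - Multiset.card l.parts by
        rw [← Polynomial.C_1 (R := ℚ)]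
        rw [Polynomial.natDegree_pow, Polynomial.natDegree_X_sub_C, mul_one]]
    have := parts_card_le M l
    omega
  have hcn := Polynomial.Monic.coeff_natDegree hmon
  rw [hdeg] at hcn
  rw [hcn, mul_one]

/-- for a vertex-weighted graph `(G,ω)` with `n` vertices and total weight
`N`, the tree polynomial satisfies `τ_{(G,ω)}(x) = (x-1)^{N-n} τ_G(x)`; in particular the
largest power of `(x-1)` dividing `τ_{(G,ω)}` is exactly `N - n`. -/
theorem stmt_15 {V : Type} [Fintype V] (G : SimpleGraph V) (ω : V → ℕ)
    (hω : ∀ v, 0 < ω v) (n N : ℕ) (hn : Fintype.card V = n) (hN : ∑ v, ω v = N)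
    (a : N.Partition → ℚ) (ha : wcsf G ω = ∑ l : N.Partition, a l • XP l.parts)
    (b : n.Partition → ℚ) (hb : csf G = ∑ l : n.Partition, b l • XP l.parts) :
    basisPoly N a = (Polynomial.X - 1) ^ (N - n) * basisPoly n b ∧
      (Polynomial.X - 1) ^ (N - n) ∣ basisPoly N a ∧
      ¬ (Polynomial.X - 1) ^ (N - n + 1) ∣ basisPoly N a := by
  have hnN : n ≤ N := by
    rw [← hn, ← hN]
    calc Fintype.card V = ∑ _v : V, 1 := by simp
      _ ≤ ∑ v, ω v := Finset.sum_le_sum (fun v _ => hω v)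
  have hb' : wcsf G (fun _ => 1) = ∑ l : n.Partition, b l • XP l.parts := hb
  have hn' : ∑ _v : V, (1 : ℕ) = n := by simp [hn]
  have hPa : ∀ k : ℕ, 1 ≤ k → (PQpoly N a).eval (k : ℚ) =
      (Nat.card {c : V → Fin k // ∀ u v, G.Adj u v → c u ≠ c v} : ℚ) :=
    fun k hk => (eval_identity G ω hω N hN a ha k hk).symm
  have hPb : ∀ k : ℕ, 1 ≤ k → (PQpoly n b).eval (k : ℚ) =
      (Nat.card {c : V → Fin k // ∀ u v, G.Adj u v → c u ≠ c v} : ℚ) :=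
    fun k hk => (eval_identity G (fun _ => 1) (fun _ => Nat.one_pos) n hn' b hb' k hk).symm
  have hPQ : PQpoly N a = PQpoly n b := by
    apply eq_of_infinite_eval_eq
    apply Set.infinite_of_injective_forall_mem (f := fun k : ℕ => ((k : ℚ) + 1))
    · intro i j hij
      have : (i : ℚ) = (j : ℚ) := by
        have := hij
        simp only at this
        linarith
      exact_mod_cast this
    · intro k
      simp only [Set.mem_setOf_eq]
      have h1 : ((k + 1 : ℕ) : ℚ) = (k : ℚ) + 1 := by push_cast; ring
      rw [← h1, hPa (k + 1) (by omega), hPb (k + 1) (by omega)]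
  have hsumb : ∑ l : n.Partition, b l = 1 := by
    set R : Polynomial ℚ := Polynomial.X ^ n - PQpoly n b with hR
    have hRdeg : R.natDegree ≤ n := by
      refine le_trans (Polynomial.natDegree_sub_le _ _) ?_
      simp only [max_le_iff]
      exact ⟨by simp, PQpoly_natDegree_le n b⟩
    have hRcoeff : R.coeff n = 1 - ∑ l : n.Partition, b l := by
      rw [hR, Polynomial.coeff_sub, Polynomial.coeff_X_pow, PQpoly_coeff_top]
      simp
    have hbound : ∀ k : ℕ, 1 ≤ k →
        |R.eval (k : ℚ)| * k ≤ ((n : ℚ) * n) * (k : ℚ) ^ n := by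
      intro k hk
      have hup := chrom_upper G k
      have hlo := chrom_lower G k
      rw [hn] at hup hlo
      have hup' : (Nat.card {c : V → Fin k // ∀ u v, G.Adj u v → c u ≠ c v} : ℚ) ≤
          (k : ℚ) ^ n := by exact_mod_cast hup
      have hlo' : ((k : ℚ)) ^ n ≤
          (Nat.card {c : V → Fin k // ∀ u v, G.Adj u v → c u ≠ c v} : ℚ) +
          ((n : ℚ) * n) * (k : ℚ) ^ (n - 1) := by exact_mod_cast hlo
      have hReval : R.eval (k : ℚ) = (k : ℚ) ^ n -
          (Nat.card {c : V → Fin k // ∀ u v, G.Adj u v → c u ≠ c v} : ℚ) := by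
        rw [hR, Polynomial.eval_sub, Polynomial.eval_pow, Polynomial.eval_X, hPb k hk]
      have hk0 : (0 : ℚ) ≤ (k : ℚ) := Nat.cast_nonneg k
      have habs : |R.eval (k : ℚ)| ≤ ((n : ℚ) * n) * (k : ℚ) ^ (n - 1) := by
        rw [hReval, abs_of_nonneg (by linarith)]
        linarith
      rcases Nat.eq_zero_or_pos n with hn0 | hn0
      · subst hn0
        simp only [Nat.cast_zero, zero_mul, pow_zero, mul_one] at habs ⊢
        have h0 : |R.eval (k : ℚ)| = 0 := le_antisymm habs (abs_nonneg _)
        rw [h0, zero_mul]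
      · have hpow : (k : ℚ) ^ (n - 1) * k = (k : ℚ) ^ n := by
          rw [← pow_succ]
          congr 1
          exact Nat.succ_pred_eq_of_pos hn0
        calc |R.eval (k : ℚ)| * k ≤ ((n : ℚ) * n) * (k : ℚ) ^ (n - 1) * k :=
              mul_le_mul_of_nonneg_right habs hk0
          _ = ((n : ℚ) * n) * (k : ℚ) ^ n := by rw [mul_assoc, hpow]
    have h0 := coeff_eq_zero_of_growth R n ((n : ℚ) * n) (by positivity) hRdeg hbound
    rw [hRcoeff] at h0
    linarith
  have hmain : basisPoly N a = (Polynomial.X - 1) ^ (N - n) * basisPoly n b := by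
    apply eq_of_infinite_eval_eq
    apply Set.infinite_of_injective_forall_mem (f := fun k : ℕ => ((k : ℚ) + 2))
    · intro i j hij
      have : (i : ℚ) = (j : ℚ) := by
        simp only at hij
        linarith
      exact_mod_cast this
    · intro k
      simp only [Set.mem_setOf_eq]
      set y : ℚ := (k : ℚ) + 2 with hy
      have hy1' : (0 : ℚ) < y - 1 := by
        rw [hy]
        have : (0 : ℚ) ≤ (k : ℚ) := Nat.cast_nonneg k
        linarith
      have hy1 : y - 1 ≠ 0 := ne_of_gt hy1'
      set x : ℚ := y / (y - 1) with hx
      have hxy : x * (y - 1) = y := div_mul_cancel₀ _ hy1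
      have hx1 : (x - 1) * (y - 1) = 1 := by
        rw [sub_mul, hxy]
        ring
      have hA : ∀ (M : ℕ) (cfs : M.Partition → ℚ),
          (basisPoly M cfs).eval y = (y - 1) ^ M * (PQpoly M cfs).eval x := by
        intro M cfs
        rw [PQpoly_eval]
        unfold basisPoly
        rw [Polynomial.eval_finset_sum, Finset.mul_sum]
        refine Finset.sum_congr rfl (fun l _ => ?_)
        have hle := parts_card_le M l
        simp only [Polynomial.eval_mul, Polynomial.eval_C, Polynomial.eval_pow,
          Polynomial.eval_X]
        have e1 : (y - 1 : ℚ) ^ M =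
            (y - 1) ^ (Multiset.card l.parts) * (y - 1) ^ (M - Multiset.card l.parts) := by
          rw [← pow_add]
          congr 1
          omega
        rw [e1]
        calc cfs l * y ^ (Multiset.card l.parts)
            = cfs l * ((x * (y - 1)) ^ (Multiset.card l.parts) *
              ((x - 1) * (y - 1)) ^ (M - Multiset.card l.parts)) := by
              rw [hxy, hx1, one_pow, mul_one]
          _ = (y - 1) ^ (Multiset.card l.parts) * (y - 1) ^ (M - Multiset.card l.parts) *
              (cfs l * (x ^ (Multiset.card l.parts) *
                (x - 1) ^ (M - Multiset.card l.parts))) := by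
              rw [mul_pow, mul_pow]
              ring
      rw [hA N a]
      rw [Polynomial.eval_mul, Polynomial.eval_pow, Polynomial.eval_sub, Polynomial.eval_X,
        Polynomial.eval_one]
      rw [hA n b, hPQ]
      have e2 : (y - 1 : ℚ) ^ N = (y - 1) ^ (N - n) * (y - 1) ^ n := by
        rw [← pow_add]
        congr 1
        omega
      rw [e2]
      ring
  refine ⟨hmain, ⟨basisPoly n b, hmain⟩, ?_⟩
  intro hdvd
  rw [hmain, pow_succ] at hdvd
  have hXne : (Polynomial.X - 1 : Polynomial ℚ) ≠ 0 := by
    rw [← Polynomial.C_1 (R := ℚ)]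
    exact Polynomial.X_sub_C_ne_zero 1
  have hpne : ((Polynomial.X - 1 : Polynomial ℚ)) ^ (N - n) ≠ 0 := pow_ne_zero _ hXne
  have hdvd2 : (Polynomial.X - 1 : Polynomial ℚ) ∣ basisPoly n b :=
    (mul_dvd_mul_iff_left hpne).1 hdvd
  have hroot : (basisPoly n b).eval 1 = 0 := by
    rw [← Polynomial.C_1 (R := ℚ)] at hdvd2
    exact Polynomial.dvd_iff_isRoot.1 hdvd2
  have heval1 : (basisPoly n b).eval 1 = ∑ l : n.Partition, b l := by
    unfold basisPoly
    rw [Polynomial.eval_finset_sum]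
    simp
  rw [heval1, hsumb] at hroot
  exact one_ne_zero hroot
end
end

section
/- The tree polynomial of the power-sum symmetric function p_λ is τ_{p_λ}(x) = x^{ℓ(λ)}(x-1)^{|λ|-ℓ(λ)}. -/
open Polynomial

noncomputable section
open scoped Classical

namespace Stmt17

open Finset

lemma deg_add (d e : ℕ →₀ ℕ) :
    Finsupp.degree (d + e) = Finsupp.degree d + Finsupp.degree e := by
  simp [Finsupp.degree_eq_weight_one, map_add]

lemma deg_single (i m : ℕ) : Finsupp.degree (Finsupp.single i m) = m := by
  simp [Finsupp.degree_eq_weight_one, Finsupp.weight_apply]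

/-- The finset of monomials of degree `n` supported in the first `k` variables. -/
def D (k n : ℕ) : Finset (ℕ →₀ ℕ) := Finset.finsuppAntidiag (Finset.range k) n

lemma mem_D {k n : ℕ} {d : ℕ →₀ ℕ} :
    d ∈ D k n ↔ Finsupp.degree d = n ∧ d.support ⊆ Finset.range k := by
  rw [D, Finset.mem_finsuppAntidiag']
  simp [Finsupp.degree, Finsupp.sum]
  exact fun _ => Iff.rfl

/-- Truncated evaluation at `x_0 = ⋯ = x_{k-1} = 1`, other variables `0`, of the
degree-`n` part. -/
def T (k n : ℕ) (f : MvPowerSeries ℕ ℚ) : ℚ := ∑ d ∈ D k n, f d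

/-- `f` is homogeneous of degree `n`. -/
def Hom (n : ℕ) (f : MvPowerSeries ℕ ℚ) : Prop :=
  ∀ d, f d ≠ 0 → Finsupp.degree d = n

lemma coeff_mul' (f g : MvPowerSeries ℕ ℚ) (d : ℕ →₀ ℕ) :
    (f * g) d = ∑ p ∈ Finset.HasAntidiagonal.antidiagonal d, f p.1 * g p.2 :=
  MvPowerSeries.coeff_mul d f g

lemma hom_mul {n₁ n₂ : ℕ} {f g : MvPowerSeries ℕ ℚ} (hf : Hom n₁ f) (hg : Hom n₂ g) :
    Hom (n₁ + n₂) (f * g) := by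
  intro d hd
  rw [coeff_mul'] at hd
  obtain ⟨p, hp, hne⟩ := Finset.exists_ne_zero_of_sum_ne_zero hd
  rw [Finset.HasAntidiagonal.mem_antidiagonal] at hp
  have h1 := hf p.1 (left_ne_zero_of_mul hne)
  have h2 := hg p.2 (right_ne_zero_of_mul hne)
  rw [← hp, deg_add, h1, h2]

lemma support_subset_left {d₁ d₂ : ℕ →₀ ℕ} : d₁.support ⊆ (d₁ + d₂).support := by
  intro i hi
  simp only [Finsupp.mem_support_iff, Finsupp.add_apply] at *
  omega

lemma support_subset_right {d₁ d₂ : ℕ →₀ ℕ} : d₂.support ⊆ (d₁ + d₂).support := by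
  intro i hi
  simp only [Finsupp.mem_support_iff, Finsupp.add_apply] at *
  omega

lemma T_mul {k n₁ n₂ : ℕ} {f g : MvPowerSeries ℕ ℚ} (hf : Hom n₁ f) (hg : Hom n₂ g) :
    T k (n₁ + n₂) (f * g) = T k n₁ f * T k n₂ g := by
  unfold T
  rw [Finset.sum_mul_sum (D k n₁) (D k n₂) (fun d => f d) (fun d => g d)]
  have hL : ∑ d ∈ D k (n₁+n₂), (f * g) d
      = ∑ x ∈ (D k (n₁+n₂)).sigma (fun d => Finset.HasAntidiagonal.antidiagonal d), f x.2.1 * g x.2.2 := by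
    rw [Finset.sum_sigma]
    exact Finset.sum_congr rfl fun d _ => coeff_mul' f g d
  rw [hL, ← Finset.sum_product']
  refine Finset.sum_bij_ne_zero (fun x _ _ => x.2) ?_ ?_ ?_ ?_
  · rintro ⟨d, d₁, d₂⟩ h₁ h₂
    show (d₁, d₂) ∈ _ ×ˢ _
    simp only [Finset.mem_sigma, Finset.HasAntidiagonal.mem_antidiagonal] at h₁
    obtain ⟨hd, hsum⟩ := h₁
    rw [mem_D] at hd
    have hf1 : f d₁ ≠ 0 := left_ne_zero_of_mul h₂
    have hg1 : g d₂ ≠ 0 := right_ne_zero_of_mul h₂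
    rw [Finset.mem_product, mem_D, mem_D]
    refine ⟨⟨hf d₁ hf1, ?_⟩, hg d₂ hg1, ?_⟩
    · exact subset_trans (hsum ▸ support_subset_left) hd.2
    · exact subset_trans (hsum ▸ support_subset_right) hd.2
  · rintro ⟨d, d₁, d₂⟩ h₁ h₂ ⟨d', e₁, e₂⟩ h₁' h₂' heq
    simp only [Finset.mem_sigma, Finset.HasAntidiagonal.mem_antidiagonal] at h₁ h₁'
    have he1 : d₁ = e₁ := congrArg Prod.fst heq
    have he2 : d₂ = e₂ := congrArg Prod.snd heq
    subst he1; subst he2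
    have : d = d' := by rw [← h₁.2, ← h₁'.2]
    subst this; rfl
  · rintro ⟨d₁, d₂⟩ hb hgb
    rw [Finset.mem_product, mem_D, mem_D] at hb
    have hmem : (⟨d₁ + d₂, (d₁, d₂)⟩ : Σ _ : ℕ →₀ ℕ, (ℕ →₀ ℕ) × (ℕ →₀ ℕ)) ∈
        (D k (n₁+n₂)).sigma (fun d => Finset.HasAntidiagonal.antidiagonal d) := by
      simp only [Finset.mem_sigma, Finset.HasAntidiagonal.mem_antidiagonal, mem_D]
      refine ⟨⟨?_, ?_⟩, trivial⟩
      · rw [deg_add, hb.1.1, hb.2.1]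
      · intro i hi
        rcases Finset.mem_union.mp (Finsupp.support_add hi) with h | h
        · exact hb.1.2 h
        · exact hb.2.2 h
    exact ⟨⟨d₁ + d₂, (d₁, d₂)⟩, hmem, hgb, rfl⟩
  · intros; rfl


/-! ### Counting colourings -/

/-- The colour-class-size monomial of a colouring. -/
def cnt {V : Type} [Fintype V] (κ : V → ℕ) : ℕ →₀ ℕ :=
  ∑ v ∈ Finset.univ, Finsupp.single (κ v) 1

lemma cnt_apply {V : Type} [Fintype V] (κ : V → ℕ) (i : ℕ) :
    cnt κ i = (Finset.univ.filter (fun v => κ v = i)).card := by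
  rw [cnt, Finset.sum_apply']
  rw [Finset.sum_congr rfl (fun v _ => Finsupp.single_apply)]
  rw [Finset.sum_boole, Nat.cast_id]

lemma cnt_degree {V : Type} [Fintype V] (κ : V → ℕ) :
    Finsupp.degree (cnt κ) = Fintype.card V := by
  have : Finsupp.degree (cnt κ) = ∑ v ∈ Finset.univ, Finsupp.degree (Finsupp.single (κ v) 1) := by
    simp only [Finsupp.degree_eq_weight_one, cnt]
    exact map_sum _ _ _
  rw [this, Finset.sum_congr rfl (fun v _ => deg_single (κ v) 1)]
  rw [Finset.sum_const, smul_eq_mul, mul_one, Fintype.card]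

lemma cnt_exists {V : Type} [Fintype V] {κ : V → ℕ} {i : ℕ} (hi : i ∈ (cnt κ).support) :
    ∃ v, κ v = i := by
  rw [Finsupp.mem_support_iff, cnt_apply] at hi
  obtain ⟨v, hv⟩ := Finset.card_ne_zero.mp hi
  exact ⟨v, (Finset.mem_filter.mp hv).2⟩

lemma cnt_mem_support {V : Type} [Fintype V] (κ : V → ℕ) (v : V) :
    κ v ∈ (cnt κ).support := by
  rw [Finsupp.mem_support_iff, cnt_apply]
  apply Finset.card_ne_zero.mpr
  exact ⟨v, Finset.mem_filter.mpr ⟨Finset.mem_univ v, rfl⟩⟩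

lemma cnt_cond_iff {V : Type} [Fintype V] (κ : V → ℕ) (d : ℕ →₀ ℕ) :
    (∀ i : ℕ, ∑ v ∈ Finset.univ.filter (fun v => κ v = i), (fun _ : V => 1) v = d i)
      ↔ cnt κ = d := by
  constructor
  · intro h
    ext i
    rw [cnt_apply, ← h i]
    simp
  · intro h i
    rw [← h, cnt_apply]
    simp

lemma csf_coeff {V : Type} [Fintype V] (G : SimpleGraph V) (d : ℕ →₀ ℕ) :
    csf G d = (Nat.card {κ : V → ℕ // (∀ u v, G.Adj u v → κ u ≠ κ v) ∧ cnt κ = d} : ℚ) := by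
  have e : {κ : V → ℕ // (∀ u v, G.Adj u v → κ u ≠ κ v) ∧
      ∀ i : ℕ, ∑ v ∈ Finset.univ.filter (fun v => κ v = i), (fun _ : V => 1) v = d i}
      ≃ {κ : V → ℕ // (∀ u v, G.Adj u v → κ u ≠ κ v) ∧ cnt κ = d} :=
    Equiv.subtypeEquivRight fun κ => by
      rw [and_congr_right_iff]
      exact fun _ => cnt_cond_iff κ d
  rw [csf, wcsf]
  exact congrArg Nat.cast (Nat.card_congr e)

lemma hom_csf {V : Type} [Fintype V] (G : SimpleGraph V) :
    Hom (Fintype.card V) (csf G) := by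
  intro d hd
  rw [csf_coeff] at hd
  have h0 : Nat.card {κ : V → ℕ // (∀ u v, G.Adj u v → κ u ≠ κ v) ∧ cnt κ = d} ≠ 0 := by
    exact_mod_cast hd
  obtain ⟨⟨κ, _, hκ⟩⟩ := (Nat.card_ne_zero.mp h0).1
  rw [← hκ, cnt_degree]

lemma T_csf_card {V : Type} [Fintype V] (G : SimpleGraph V) (k : ℕ) :
    T k (Fintype.card V) (csf G) =
      (Nat.card {c : V → Fin k // ∀ u v, G.Adj u v → c u ≠ c v} : ℚ) := by
  classical
  rw [Nat.card_eq_fintype_card]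
  rw [T, Finset.sum_congr rfl (fun d _ => csf_coeff G d)]
  have key : ∀ d ∈ D k (Fintype.card V),
      Nat.card {κ : V → ℕ // (∀ u v, G.Adj u v → κ u ≠ κ v) ∧ cnt κ = d}
        = ((Finset.univ.filter (fun c : V → Fin k => ∀ u v, G.Adj u v → c u ≠ c v)).filter
            (fun c => cnt (fun v => (c v : ℕ)) = d)).card := by
    intro d hd
    have hlt : ∀ (κ : V → ℕ), cnt κ = d → ∀ v, κ v < k := by
      intro κ hκ v
      have := cnt_mem_support κ v
      rw [hκ] at this
      exact Finset.mem_range.mp ((mem_D.mp hd).2 this)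
    have e : {κ : V → ℕ // (∀ u v, G.Adj u v → κ u ≠ κ v) ∧ cnt κ = d}
        ≃ {c : V → Fin k // (∀ u v, G.Adj u v → c u ≠ c v) ∧ cnt (fun v => (c v : ℕ)) = d} := by
      refine ⟨fun κ => ⟨fun v => ⟨κ.1 v, hlt κ.1 κ.2.2 v⟩, ?_, ?_⟩,
        fun c => ⟨fun v => (c.1 v : ℕ), ?_, c.2.2⟩, fun κ => rfl, fun c => rfl⟩
      · exact fun u v hadj h => κ.2.1 u v hadj (congrArg Fin.val h)
      · exact κ.2.2
      · exact fun u v hadj h => c.2.1 u v hadj (Fin.val_injective h)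
    rw [Nat.card_congr e, Nat.card_eq_fintype_card, Fintype.card_subtype, Finset.filter_filter]
  rw [Finset.sum_congr rfl (fun d hd => (congrArg Nat.cast (key d hd) :
    ((Nat.card {κ : V → ℕ // (∀ u v, G.Adj u v → κ u ≠ κ v) ∧ cnt κ = d} : ℕ) : ℚ) = _))]
  rw [← Nat.cast_sum]
  have fiber : (Finset.univ.filter (fun c : V → Fin k => ∀ u v, G.Adj u v → c u ≠ c v)).card
      = ∑ d ∈ D k (Fintype.card V),
        ((Finset.univ.filter (fun c : V → Fin k => ∀ u v, G.Adj u v → c u ≠ c v)).filter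
          (fun c => cnt (fun v => (c v : ℕ)) = d)).card := by
    apply Finset.card_eq_sum_card_fiberwise
    intro c _
    rw [Finset.mem_coe, mem_D]
    constructor
    · exact cnt_degree _
    · intro i hi
      obtain ⟨v, hv⟩ := cnt_exists hi
      rw [Finset.mem_range, ← hv]
      exact (c v).isLt
  rw [← fiber, Fintype.card_subtype]



/-! ### Colourings of path graphs -/

def Ppred (k m : ℕ) (c : Fin (m+1) → Fin k) : Prop :=
  ∀ i : Fin m, c i.castSucc ≠ c i.succ

lemma proper_iff_ppred {k m : ℕ} (c : Fin (m+1) → Fin k) :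
    (∀ u v, (SimpleGraph.pathGraph (m+1)).Adj u v → c u ≠ c v) ↔ Ppred k m c := by
  constructor
  · intro h i
    apply h
    rw [SimpleGraph.pathGraph_adj]
    left
    simp
  · intro h u v hadj
    rw [SimpleGraph.pathGraph_adj] at hadj
    rcases hadj with h1 | h1
    · have hvlt := v.isLt
      have hu : u.val < m := by omega
      have h2 : u = (⟨u.val, hu⟩ : Fin m).castSucc := by ext; rfl
      have h3 : v = (⟨u.val, hu⟩ : Fin m).succ := by ext; simp [Fin.val_succ]; omega
      rw [h2, h3]; exact h _
    · have hult := u.isLt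
      have hv : v.val < m := by omega
      have h2 : v = (⟨v.val, hv⟩ : Fin m).castSucc := by ext; rfl
      have h3 : u = (⟨v.val, hv⟩ : Fin m).succ := by ext; simp [Fin.val_succ]; omega
      rw [h2, h3]; exact (h _).symm

lemma card_ppred (k m : ℕ) :
    Fintype.card {c : Fin (m+1) → Fin k // Ppred k m c} = k * (k-1)^m := by
  induction m with
  | zero =>
      rw [pow_zero, mul_one]
      have e : {c : Fin 1 → Fin k // Ppred k 0 c} ≃ Fin k :=
        (Equiv.subtypeUnivEquiv (fun c (i : Fin 0) => i.elim0)).trans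
          (Equiv.funUnique (Fin 1) (Fin k))
      rw [Fintype.card_congr e, Fintype.card_fin]
  | succ m ih =>
      have e1 : {c : Fin (m+2) → Fin k // Ppred k (m+1) c}
          ≃ {q : (Fin (m+1) → Fin k) × Fin k // Ppred k m q.1 ∧ q.2 ≠ q.1 0} := by
        refine ⟨fun c => ⟨(Fin.tail c.1, c.1 0), ?_, ?_⟩,
          fun q => ⟨Fin.cons q.1.2 q.1.1, ?_⟩, ?_, ?_⟩
        · intro i
          show c.1 i.castSucc.succ ≠ c.1 i.succ.succ
          rw [Fin.succ_castSucc]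
          exact c.2 i.succ
        · have := c.2 0
          rwa [Fin.castSucc_zero] at this
        · intro i
          induction i using Fin.cases with
          | zero =>
              rw [Fin.castSucc_zero, Fin.cons_zero, Fin.succ_zero_eq_one]
              have : (1 : Fin (m+2)) = (0 : Fin (m+1)).succ := rfl
              rw [this, Fin.cons_succ]
              exact q.2.2
          | succ j =>
              rw [← Fin.succ_castSucc, Fin.cons_succ, Fin.cons_succ]
              exact q.2.1 j
        · intro c
          exact Subtype.ext (Fin.cons_self_tail c.1)
        · intro q
          apply Subtype.ext
          simp
      rw [Fintype.card_congr (e1.trans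
        (Equiv.subtypeProdEquivSigmaSubtype (fun c' (x : Fin k) => Ppred k m c' ∧ x ≠ c' 0)))]
      rw [Fintype.card_sigma]
      have step : ∀ c' : Fin (m+1) → Fin k,
          Fintype.card {x : Fin k // Ppred k m c' ∧ x ≠ c' 0}
            = if Ppred k m c' then k - 1 else 0 := by
        intro c'
        by_cases h : Ppred k m c'
        · rw [if_pos h, Fintype.card_congr (Equiv.subtypeEquivRight fun x => and_iff_right h)]
          have : Fintype.card {x : Fin k // x ≠ c' 0}
              = Fintype.card (Fin k) - Fintype.card {x : Fin k // x = c' 0} :=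
            Fintype.card_subtype_compl _
          rw [this, Fintype.card_subtype_eq, Fintype.card_fin]
        · rw [if_neg h, Fintype.card_eq_zero_iff]
          exact ⟨fun x => h x.2.1⟩
      rw [Finset.sum_congr rfl (fun c' _ => step c')]
      rw [← Finset.sum_filter, Finset.sum_const, smul_eq_mul]
      rw [← Fintype.card_subtype, ih, pow_succ, mul_assoc]

lemma card_path_colourings (k m : ℕ) :
    Nat.card {c : Fin (m+1) → Fin k //
      ∀ u v, (SimpleGraph.pathGraph (m+1)).Adj u v → c u ≠ c v} = k * (k-1)^m := by
  classical
  rw [Nat.card_eq_fintype_card,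
    Fintype.card_congr (Equiv.subtypeEquivRight fun c => proper_iff_ppred c), card_ppred]

lemma T_csf {k m : ℕ} (hk : 0 < k) :
    T k (m+1) (csf (SimpleGraph.pathGraph (m+1))) = (k : ℚ) * ((k : ℚ) - 1) ^ m := by
  have h := T_csf_card (SimpleGraph.pathGraph (m+1)) k
  rw [Fintype.card_fin] at h
  rw [h, card_path_colourings]
  push_cast [Nat.cast_sub hk]
  ring



/-! ### psum and products -/

lemma hom_one : Hom 0 1 := by
  intro d hd
  rw [show (1 : MvPowerSeries ℕ ℚ) d = MvPowerSeries.coeff d 1 from rfl,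
    MvPowerSeries.coeff_one] at hd
  simp only [ne_eq, ite_eq_right_iff, not_forall] at hd
  rw [hd.1, map_zero]

lemma D_zero (k : ℕ) : D k 0 = {0} := by
  ext d
  rw [mem_D, Finset.mem_singleton]
  constructor
  · rintro ⟨h, -⟩
    exact (Finsupp.degree_eq_zero_iff d).mp h
  · rintro rfl
    simp

lemma T_one (k : ℕ) : T k 0 1 = 1 := by
  rw [T, D_zero, Finset.sum_singleton (fun d => (1 : MvPowerSeries ℕ ℚ) d) 0]
  have h1 : (1 : MvPowerSeries ℕ ℚ) (0 : ℕ →₀ ℕ)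
      = MvPowerSeries.coeff (0 : ℕ →₀ ℕ) (1 : MvPowerSeries ℕ ℚ) := rfl
  rw [h1, MvPowerSeries.coeff_one, if_pos rfl]

lemma hom_psum (m : ℕ) : Hom m (psum m) := by
  intro d hd
  rw [show psum m d = if ∃ i, d = Finsupp.single i m then 1 else 0 from rfl] at hd
  simp only [ne_eq, ite_eq_right_iff, not_forall] at hd
  obtain ⟨⟨i, rfl⟩, -⟩ := hd
  exact deg_single i m

lemma T_psum {k m : ℕ} (hm : 0 < m) : T k m (psum m) = (k : ℚ) := by
  rw [T]
  show (∑ d ∈ D k m, if ∃ i, d = Finsupp.single i m then (1 : ℚ) else 0) = k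
  rw [Finset.sum_boole]
  have himg : (D k m).filter (fun d => ∃ i, d = Finsupp.single i m)
      = (Finset.range k).image (fun i => Finsupp.single i m) := by
    ext e
    rw [Finset.mem_filter, Finset.mem_image]
    constructor
    · rintro ⟨he, i, rfl⟩
      refine ⟨i, ?_, rfl⟩
      have hsupp : i ∈ (Finsupp.single i m).support := by
        rw [Finsupp.mem_support_iff, Finsupp.single_eq_same]
        omega
      exact (mem_D.mp he).2 hsupp
    · rintro ⟨i, hi, rfl⟩
      refine ⟨mem_D.mpr ⟨deg_single i m, ?_⟩, i, rfl⟩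
      intro j hj
      rw [Finsupp.mem_support_iff] at hj
      have hji : j = i := by
        by_contra hne
        rw [Finsupp.single_eq_of_ne' (Ne.symm hne)] at hj
        exact hj rfl
      subst hji; exact hi
  rw [himg, Finset.card_image_of_injective _
    (Finsupp.single_left_injective (by omega : m ≠ 0)), Finset.card_range]

lemma card_le_sum (μ : Multiset ℕ) (hpos : ∀ m ∈ μ, 0 < m) :
    Multiset.card μ ≤ μ.sum := by
  induction μ using Multiset.induction_on with
  | empty => simp
  | cons m μ ih =>
      rw [Multiset.card_cons, Multiset.sum_cons]
      have hm := hpos m (Multiset.mem_cons_self m μ)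
      have := ih (fun x hx => hpos x (Multiset.mem_cons_of_mem hx))
      omega

lemma pp_cons (m : ℕ) (μ : Multiset ℕ) : pp (m ::ₘ μ) = psum m * pp μ := by
  rw [pp, pp, Multiset.map_cons, Multiset.prod_cons]

lemma XP_cons (m : ℕ) (μ : Multiset ℕ) :
    XP (m ::ₘ μ) = csf (SimpleGraph.pathGraph m) * XP μ := by
  rw [XP, XP, Multiset.map_cons, Multiset.prod_cons]

lemma hom_csf_path (m : ℕ) : Hom m (csf (SimpleGraph.pathGraph m)) := by
  have := hom_csf (SimpleGraph.pathGraph m)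
  rwa [Fintype.card_fin] at this

lemma hom_pp (μ : Multiset ℕ) : Hom μ.sum (pp μ) := by
  induction μ using Multiset.induction_on with
  | empty => rw [show pp 0 = 1 from by simp [pp], show (0 : Multiset ℕ).sum = 0 from rfl]; exact hom_one
  | cons m μ ih =>
      rw [pp_cons, Multiset.sum_cons]
      exact hom_mul (hom_psum m) ih

lemma hom_XP (μ : Multiset ℕ) : Hom μ.sum (XP μ) := by
  induction μ using Multiset.induction_on with
  | empty => rw [show XP 0 = 1 from by simp [XP], show (0 : Multiset ℕ).sum = 0 from rfl]; exact hom_one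
  | cons m μ ih =>
      rw [XP_cons, Multiset.sum_cons]
      exact hom_mul (hom_csf_path m) ih

lemma T_pp {k : ℕ} (μ : Multiset ℕ) (hpos : ∀ m ∈ μ, 0 < m) :
    T k μ.sum (pp μ) = (k : ℚ) ^ Multiset.card μ := by
  induction μ using Multiset.induction_on with
  | empty =>
      rw [show pp 0 = 1 from by simp [pp], show (0 : Multiset ℕ).sum = 0 from rfl, T_one]
      simp
  | cons m μ ih =>
      rw [Multiset.sum_cons, pp_cons, T_mul (hom_psum m) (hom_pp μ),
        T_psum (hpos m (Multiset.mem_cons_self m μ)),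
        ih (fun x hx => hpos x (Multiset.mem_cons_of_mem hx)),
        Multiset.card_cons, pow_succ]
      ring

lemma T_XP {k : ℕ} (hk : 0 < k) (μ : Multiset ℕ) (hpos : ∀ m ∈ μ, 0 < m) :
    T k μ.sum (XP μ) = (k : ℚ) ^ Multiset.card μ
      * ((k : ℚ) - 1) ^ (μ.sum - Multiset.card μ) := by
  induction μ using Multiset.induction_on with
  | empty =>
      rw [show XP 0 = 1 from by simp [XP], show (0 : Multiset ℕ).sum = 0 from rfl, T_one]
      simp
  | cons m μ ih =>
      obtain ⟨m', rfl⟩ : ∃ m', m = m' + 1 :=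
        ⟨m - 1, by have := hpos m (Multiset.mem_cons_self m μ); omega⟩
      have hposμ : ∀ x ∈ μ, 0 < x := fun x hx => hpos x (Multiset.mem_cons_of_mem hx)
      rw [Multiset.sum_cons, XP_cons, T_mul (hom_csf_path (m'+1)) (hom_XP μ), T_csf hk,
        ih hposμ, Multiset.card_cons]
      have hc : Multiset.card μ ≤ μ.sum := card_le_sum μ hposμ
      have harith : (m' + 1 + μ.sum) - (Multiset.card μ + 1)
          = m' + (μ.sum - Multiset.card μ) := by omega
      rw [harith, pow_succ, pow_add]
      ring

lemma parts_card_le {n : ℕ} (d : n.Partition) : Multiset.card d.parts ≤ n := by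
  have := card_le_sum d.parts (fun m hm => d.parts_pos hm)
  rwa [d.parts_sum] at this

lemma eval_identity {n : ℕ} (l : Nat.Partition n) (a : n.Partition → ℚ)
    (ha : pp l.parts = ∑ d : n.Partition, a d • XP d.parts) (k : ℕ) (hk : 0 < k) :
    (k : ℚ) ^ Multiset.card l.parts
      = ∑ d : n.Partition, a d * ((k : ℚ) ^ Multiset.card d.parts
          * ((k : ℚ) - 1) ^ (n - Multiset.card d.parts)) := by
  have hL : T k n (pp l.parts) = (k : ℚ) ^ Multiset.card l.parts := by
    have := T_pp (k := k) l.parts (fun m hm => l.parts_pos hm)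
    rwa [l.parts_sum] at this
  have hR : T k n (∑ d : n.Partition, a d • XP d.parts)
      = ∑ d : n.Partition, a d * ((k : ℚ) ^ Multiset.card d.parts
          * ((k : ℚ) - 1) ^ (n - Multiset.card d.parts)) := by
    rw [T]
    have swap : ∀ e ∈ D k n, (∑ d : n.Partition, a d • XP d.parts) e
        = ∑ d : n.Partition, a d * XP d.parts e := by
      intro e _
      exact (Finset.sum_apply (M := fun _ => ℚ) e Finset.univ
        (fun d => (a d • XP d.parts : (ℕ →₀ ℕ) → ℚ))).trans rfl
    rw [Finset.sum_congr rfl swap, Finset.sum_comm]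
    refine Finset.sum_congr rfl fun d _ => ?_
    rw [← Finset.mul_sum (D k n) (fun x => XP d.parts x) (a d)]
    congr 1
    have := T_XP hk d.parts (fun m hm => d.parts_pos hm)
    rwa [d.parts_sum] at this
  rw [← hL, ha, hR]


end Stmt17

/-- the tree polynomial of the power-sum symmetric function `p_λ` is
`τ_{p_λ}(x) = x^{ℓ(λ)} (x-1)^{|λ|-ℓ(λ)}`: if `p_λ = Σ_{Δ ⊢ n} a_Δ X_{P_Δ}` then
`Σ_Δ a_Δ x^{ℓ(Δ)} = x^{ℓ(λ)} (x-1)^{n-ℓ(λ)}`. -/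
theorem stmt_17 (n : ℕ) (l : Nat.Partition n) (a : n.Partition → ℚ)
    (ha : pp l.parts = ∑ d : n.Partition, a d • XP d.parts) :
    basisPoly n a =
      Polynomial.X ^ l.parts.card * (Polynomial.X - 1) ^ (n - l.parts.card) := by
  classical
  set L := Multiset.card l.parts with hLdef
  set P1 : Polynomial ℚ := ∑ d : n.Partition,
    Polynomial.C (a d) * Polynomial.X ^ (Multiset.card d.parts)
      * (Polynomial.X - 1) ^ (n - Multiset.card d.parts) with hP1
  have hP1eval : ∀ t : ℚ, P1.eval t = ∑ d : n.Partition,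
      a d * (t ^ Multiset.card d.parts * (t - 1) ^ (n - Multiset.card d.parts)) := by
    intro t
    rw [hP1, Polynomial.eval_finset_sum]
    refine Finset.sum_congr rfl fun d _ => ?_
    simp [mul_assoc]
  have hQ : P1 = Polynomial.X ^ L := by
    apply Polynomial.eq_of_infinite_eval_eq
    have hinj : Function.Injective (fun j : ℕ => ((j : ℚ) + 1)) := by
      intro x y h
      simp only [add_left_inj, Nat.cast_inj] at h
      exact h
    refine Set.Infinite.mono ?_ (Set.infinite_range_of_injective hinj)
    rintro x ⟨j, rfl⟩
    simp only [Set.mem_setOf_eq, Polynomial.eval_pow, Polynomial.eval_X]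
    rw [hP1eval]
    have hid := Stmt17.eval_identity l a ha (j + 1) (Nat.succ_pos j)
    push_cast at hid
    exact hid.symm
  have main : ∀ t : ℚ, t ≠ 1 → (basisPoly n a).eval t
      = (Polynomial.X ^ L * (Polynomial.X - 1) ^ (n - L) : Polynomial ℚ).eval t := by
    intro t ht
    have hu : t - 1 ≠ 0 := sub_ne_zero.mpr ht
    set s := t / (t - 1) with hs
    have hs1 : s - 1 = 1 / (t - 1) := by
      rw [hs, div_sub_one hu]
      norm_num
    have keyterm : ∀ j, j ≤ n → s ^ j * (s - 1) ^ (n - j) * (t - 1) ^ n = t ^ j := by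
      intro j hj
      have hsplit : (t - 1) ^ n = (t - 1) ^ j * (t - 1) ^ (n - j) := by
        rw [← pow_add]
        congr 1
        omega
      rw [hs1, hs, hsplit, div_pow, div_pow, one_pow]
      field_simp
    have keyterm2 : s ^ L * (t - 1) ^ n = t ^ L * (t - 1) ^ (n - L) := by
      have hLn : L ≤ n := Stmt17.parts_card_le l
      have hsplit : (t - 1) ^ n = (t - 1) ^ L * (t - 1) ^ (n - L) := by
        rw [← pow_add]
        congr 1
        omega
      rw [hs, hsplit, div_pow]
      field_simp
    have hQs := congrArg (Polynomial.eval s) hQ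
    rw [hP1eval, Polynomial.eval_pow, Polynomial.eval_X] at hQs
    have hbp : (basisPoly n a).eval t = ∑ d : n.Partition, a d * t ^ Multiset.card d.parts := by
      rw [basisPoly, Polynomial.eval_finset_sum]
      exact Finset.sum_congr rfl fun d _ => by simp
    have hterm : ∀ d : n.Partition, a d * t ^ Multiset.card d.parts
        = a d * (s ^ Multiset.card d.parts * (s - 1) ^ (n - Multiset.card d.parts))
            * (t - 1) ^ n := by
      intro d
      rw [← keyterm (Multiset.card d.parts) (Stmt17.parts_card_le d)]
      ring
    rw [hbp, Finset.sum_congr rfl (fun d _ => hterm d), ← Finset.sum_mul, hQs, keyterm2,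
      Polynomial.eval_mul, Polynomial.eval_pow, Polynomial.eval_pow, Polynomial.eval_sub,
      Polynomial.eval_X, Polynomial.eval_one]
  apply Polynomial.eq_of_infinite_eval_eq
  have hinf : ({1}ᶜ : Set ℚ).Infinite := Set.Finite.infinite_compl (Set.finite_singleton 1)
  exact hinf.mono fun t ht => main t ht
end
end

section
/- For any vertex-weighted graph (G,ω), the polynomial obtained by expanding X_{(G,ω)} in the power-sum basis and mapping p_λ ↦ x^{ℓ(λ)} equals the ordinary chromatic polynomial of the underlying unweighted graph G: χ_{(G,ω)} = χ_G. In particular this polynomial is independent of the weight function ω. -/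
open Polynomial

noncomputable section
open scoped Classical

namespace Stmt18Aux

open Finset

/-- Evaluation of a power series at `x_i = 1` for `i < k`, `x_i = 0` otherwise, restricted to
the degree-`n` homogeneous component. -/
def Ek (k n : ℕ) (F : MvPowerSeries ℕ ℚ) : ℚ :=
  ∑ d ∈ (Finset.range k).finsuppAntidiag n, MvPowerSeries.coeff d F

lemma Ek_mul (k n : ℕ) (F G : MvPowerSeries ℕ ℚ) :
    Ek k n (F * G) = ∑ pq ∈ Finset.HasAntidiagonal.antidiagonal n, Ek k pq.1 F * Ek k pq.2 G := by
  unfold Ek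
  simp_rw [MvPowerSeries.coeff_mul, Finset.sum_mul_sum, ← Finset.sum_product']
  rw [Finset.sum_sigma', Finset.sum_sigma']
  refine Finset.sum_nbij'
    (fun x => ⟨(∑ i ∈ range k, x.2.1 i, ∑ i ∈ range k, x.2.2 i), x.2⟩)
    (fun x => ⟨x.2.1 + x.2.2, x.2⟩) ?_ ?_ ?_ ?_ ?_
  · rintro ⟨d, d1, d2⟩ hx
    rw [Finset.mem_sigma] at hx
    obtain ⟨hd, hp⟩ := hx
    rw [Finset.mem_finsuppAntidiag] at hd
    rw [Finset.HasAntidiagonal.mem_antidiagonal] at hp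
    dsimp only at hd hp ⊢
    have hdd : ∀ i, d i = d1 i + d2 i := fun i => by rw [← hp, Finsupp.add_apply]
    rw [Finset.mem_sigma]
    constructor
    · rw [Finset.HasAntidiagonal.mem_antidiagonal, ← Finset.sum_add_distrib]
      rw [← hd.1]
      exact Finset.sum_congr rfl fun i _ => (hdd i).symm
    · rw [Finset.mem_product]
      constructor <;> rw [Finset.mem_finsuppAntidiag] <;>
        refine ⟨rfl, fun i hi => hd.2 ?_⟩ <;>
        rw [Finsupp.mem_support_iff] at hi ⊢ <;>
        dsimp only at hi <;>
        rw [hdd i] <;> omega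
  · rintro ⟨⟨p, q⟩, d1, d2⟩ hx
    rw [Finset.mem_sigma, Finset.mem_product] at hx
    obtain ⟨hpq, h1, h2⟩ := hx
    rw [Finset.HasAntidiagonal.mem_antidiagonal] at hpq
    rw [Finset.mem_finsuppAntidiag] at h1 h2
    dsimp only at hpq h1 h2 ⊢
    rw [Finset.mem_sigma]
    constructor
    · rw [Finset.mem_finsuppAntidiag]
      constructor
      · rw [← hpq, ← h1.1, ← h2.1, ← Finset.sum_add_distrib]
        rfl
      · refine (Finsupp.support_add).trans ?_
        exact Finset.union_subset h1.2 h2.2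
    · rw [Finset.HasAntidiagonal.mem_antidiagonal]
  · rintro ⟨d, d1, d2⟩ hx
    rw [Finset.mem_sigma] at hx
    have hp := hx.2
    rw [Finset.HasAntidiagonal.mem_antidiagonal] at hp
    dsimp only at hp ⊢
    exact Sigma.ext hp (by simp)
  · rintro ⟨⟨p, q⟩, d1, d2⟩ hx
    rw [Finset.mem_sigma, Finset.mem_product] at hx
    obtain ⟨hpq, h1, h2⟩ := hx
    rw [Finset.mem_finsuppAntidiag] at h1 h2
    dsimp only at h1 h2 ⊢
    have : ((∑ i ∈ range k, d1 i, ∑ i ∈ range k, d2 i) : ℕ × ℕ) = (p, q) := by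
      rw [Prod.ext_iff]
      exact ⟨h1.1, h2.1⟩
    exact Sigma.ext this (by simp)
  · rintro ⟨d, d1, d2⟩ _
    rfl

lemma Ek_psum (k m p : ℕ) (hm : 0 < m) :
    Ek k p (psum m) = if p = m then (k : ℚ) else 0 := by
  have hc : ∀ d : ℕ →₀ ℕ, MvPowerSeries.coeff d (psum m) =
      if ∃ i, d = Finsupp.single i m then 1 else 0 := fun d => rfl
  unfold Ek
  simp_rw [hc]
  rw [Finset.sum_boole]
  have hfil : ((Finset.range k).finsuppAntidiag p).filter
      (fun d => ∃ i, d = Finsupp.single i m) =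
      if p = m then (Finset.range k).image (fun i => Finsupp.single i m) else ∅ := by
    ext d
    rw [Finset.mem_filter, Finset.mem_finsuppAntidiag]
    constructor
    · rintro ⟨⟨hsum, hsupp⟩, i, rfl⟩
      have hik : i ∈ Finset.range k := by
        apply hsupp
        rw [Finsupp.mem_support_iff, Finsupp.single_apply, if_pos rfl]
        omega
      have hsm : ∑ j ∈ range k, Finsupp.single i m j = m := by
        simp_rw [Finsupp.single_apply]
        rw [Finset.sum_ite_eq, if_pos hik]
      have : p = m := by rw [← hsum]; exact hsm
      rw [if_pos this, Finset.mem_image]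
      exact ⟨i, hik, rfl⟩
    · intro hd
      by_cases hpm : p = m
      · rw [if_pos hpm, Finset.mem_image] at hd
        obtain ⟨i, hik, rfl⟩ := hd
        refine ⟨⟨?_, ?_⟩, i, rfl⟩
        · simp_rw [Finsupp.single_apply]
          rw [Finset.sum_ite_eq, if_pos hik, hpm]
        · rw [Finsupp.support_single_ne_zero i (by omega)]
          simpa using hik
      · rw [if_neg hpm] at hd
        exact absurd hd (Finset.notMem_empty d)
  rw [hfil]
  by_cases hpm : p = m
  · rw [if_pos hpm, if_pos hpm, Finset.card_image_of_injective _
      (Finsupp.single_left_injective (by omega))]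
    simp
  · rw [if_neg hpm, if_neg hpm]
    simp

lemma Ek_pp (k : ℕ) (μ : Multiset ℕ) (hpos : ∀ m ∈ μ, 0 < m) :
    Ek k μ.sum (pp μ) = (k : ℚ) ^ Multiset.card μ := by
  induction μ using Multiset.induction with
  | empty =>
    have hA : (Finset.range k).finsuppAntidiag (0 : ℕ) = {0} := by
      ext d
      rw [Finset.mem_finsuppAntidiag, Finset.mem_singleton]
      constructor
      · rintro ⟨hsum, hsupp⟩
        ext i
        by_cases hik : i ∈ Finset.range k
        · exact Finset.sum_eq_zero_iff.1 hsum i hik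
        · by_contra hne
          exact hik (hsupp (Finsupp.mem_support_iff.2 hne))
      · rintro rfl
        simp
    have hpp0 : pp 0 = 1 := by simp [pp]
    rw [Multiset.sum_zero, hpp0]
    unfold Ek
    rw [hA, Finset.sum_singleton]
    simp [MvPowerSeries.coeff_one]
  | cons m μ ih =>
    have hm := hpos m (Multiset.mem_cons_self _ _)
    have hμ : ∀ x ∈ μ, 0 < x := fun x hx => hpos x (Multiset.mem_cons_of_mem hx)
    have hpp : pp (m ::ₘ μ) = psum m * pp μ := by
      simp [pp, Multiset.map_cons, Multiset.prod_cons]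
    rw [Multiset.sum_cons, hpp, Ek_mul]
    rw [Finset.sum_eq_single (m, μ.sum)]
    · rw [Ek_psum k m m hm, if_pos rfl, ih hμ, Multiset.card_cons, pow_succ']
    · rintro ⟨p, q⟩ hpq hne
      rw [Finset.HasAntidiagonal.mem_antidiagonal] at hpq
      by_cases hpm : p = m
      · subst hpm
        have hq : q = μ.sum := by omega
        subst hq
        exact absurd rfl hne
      · rw [Ek_psum k m p hm, if_neg hpm, zero_mul]
    · intro h
      exact absurd (Finset.HasAntidiagonal.mem_antidiagonal.2 (by simp)) h

lemma Ek_wcsf {V : Type} [Fintype V] (G : SimpleGraph V) (ω : V → ℕ)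
    (hω : ∀ v, 0 < ω v) (N : ℕ) (hN : ∑ v, ω v = N) (k : ℕ) :
    Ek k N (wcsf G ω) =
      (Nat.card {c : V → Fin k // ∀ u v, G.Adj u v → c u ≠ c v} : ℚ) := by
  classical
  set D : (V → Fin k) → (ℕ →₀ ℕ) :=
    fun c => ∑ v, Finsupp.single ((c v : ℕ)) (ω v) with hD
  have hDapply : ∀ (c : V → Fin k) (i : ℕ),
      D c i = ∑ v ∈ Finset.univ.filter (fun v => (c v : ℕ) = i), ω v := by
    intro c i
    rw [hD]
    rw [Finsupp.finset_sum_apply]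
    rw [Finset.sum_filter]
    exact Finset.sum_congr rfl fun v _ => by rw [Finsupp.single_apply]
  have hDmem : ∀ c : V → Fin k, D c ∈ (Finset.range k).finsuppAntidiag N := by
    intro c
    rw [Finset.mem_finsuppAntidiag]
    constructor
    · rw [← hN]
      have : ∀ i ∈ range k, D c i = ∑ v, Finsupp.single ((c v : ℕ)) (ω v) i :=
        fun i _ => by rw [hD, Finsupp.finset_sum_apply]
      rw [Finset.sum_congr rfl this, Finset.sum_comm]
      refine Finset.sum_congr rfl fun v _ => ?_
      simp_rw [Finsupp.single_apply]
      rw [Finset.sum_ite_eq, if_pos (Finset.mem_range.2 (c v).is_lt)]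
    · intro i hi
      rw [Finsupp.mem_support_iff, hDapply] at hi
      obtain ⟨v, hv, -⟩ := Finset.exists_ne_zero_of_sum_ne_zero hi
      rw [Finset.mem_filter] at hv
      rw [Finset.mem_range, ← hv.2]
      exact (c v).is_lt
  have key1 : ∀ d ∈ (Finset.range k).finsuppAntidiag N,
      MvPowerSeries.coeff d (wcsf G ω) =
      (Fintype.card {c : V → Fin k // (∀ u v, G.Adj u v → c u ≠ c v) ∧ D c = d} : ℚ) := by
    intro d hd
    rw [Finset.mem_finsuppAntidiag] at hd
    have hκlt : ∀ (κ : V → ℕ), ((∀ u v, G.Adj u v → κ u ≠ κ v) ∧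
        ∀ i : ℕ, ∑ v ∈ Finset.univ.filter (fun v => κ v = i), ω v = d i) →
        ∀ v, κ v < k := by
      rintro κ ⟨-, hκ⟩ v
      have h1 : 0 < d (κ v) := by
        rw [← hκ (κ v)]
        exact Finset.sum_pos (fun u _ => hω u)
          ⟨v, Finset.mem_filter.2 ⟨Finset.mem_univ v, rfl⟩⟩
      have h2 : κ v ∈ Finset.range k := hd.2 (Finsupp.mem_support_iff.2 h1.ne')
      exact Finset.mem_range.1 h2
    have hcoeff : MvPowerSeries.coeff d (wcsf G ω) =
        (Nat.card {κ : V → ℕ // (∀ u v, G.Adj u v → κ u ≠ κ v) ∧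
          ∀ i : ℕ, ∑ v ∈ Finset.univ.filter (fun v => κ v = i), ω v = d i} : ℚ) := rfl
    rw [hcoeff, ← Nat.card_eq_fintype_card]
    congr 1
    refine Nat.card_congr (Equiv.symm ?_)
    refine ⟨fun c => ⟨fun v => (c.1 v : ℕ), ?_, ?_⟩,
      fun κ => ⟨fun v => ⟨κ.1 v, hκlt κ.1 κ.2 v⟩, ?_, ?_⟩, ?_, ?_⟩
    · intro u v h hne
      exact c.2.1 u v h (Fin.val_injective hne)
    · intro i
      rw [← hDapply, c.2.2]
    · intro u v h hne
      exact κ.2.1 u v h (congrArg Fin.val hne)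
    · ext i
      rw [hDapply]
      exact κ.2.2 i
    · intro c
      apply Subtype.ext
      funext v
      exact Fin.ext rfl
    · intro κ
      apply Subtype.ext
      rfl
  have key2 : Fintype.card {c : V → Fin k // ∀ u v, G.Adj u v → c u ≠ c v} =
      ∑ d ∈ (Finset.range k).finsuppAntidiag N,
        Fintype.card {c : V → Fin k // (∀ u v, G.Adj u v → c u ≠ c v) ∧ D c = d} := by
    have hcfib : (Finset.univ : Finset {c : V → Fin k // ∀ u v, G.Adj u v → c u ≠ c v}).card =
        ∑ d ∈ (Finset.range k).finsuppAntidiag N,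
          (Finset.univ.filter
            (fun c : {c : V → Fin k // ∀ u v, G.Adj u v → c u ≠ c v} => D c.1 = d)).card :=
      Finset.card_eq_sum_card_fiberwise (fun c _ => hDmem c.1)
    rw [Fintype.card, hcfib]
    refine Finset.sum_congr rfl fun d _ => ?_
    rw [← Fintype.card_subtype]
    exact Fintype.card_congr
      ((Equiv.subtypeSubtypeEquivSubtypeInter _ (fun c => D c = d)))
  unfold Ek
  rw [Finset.sum_congr rfl key1, Nat.card_eq_fintype_card, key2]
  push_cast
  rfl

end Stmt18Aux

/-- for a vertex-weighted graph `(G,ω)` of total weight `N`, the polynomial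
`χ_{(G,ω)} = Σ_λ a_λ x^{ℓ(λ)}` obtained from the power-sum expansion
`X_{(G,ω)} = Σ_{λ ⊢ N} a_λ p_λ` equals the ordinary chromatic polynomial of the underlying
unweighted graph `G`; in particular it is independent of the weight function `ω`. -/
theorem stmt_18 {V : Type} [Fintype V] (G : SimpleGraph V) (ω : V → ℕ)
    (hω : ∀ v, 0 < ω v) (N : ℕ) (hN : ∑ v, ω v = N)
    (a : N.Partition → ℚ) (ha : wcsf G ω = ∑ l : N.Partition, a l • pp l.parts)
    (P : Polynomial ℚ) (hP : IsChromaticPoly G P) :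
    basisPoly N a = P := by
  have key : ∀ k : ℕ, 0 < k → (basisPoly N a).eval (k : ℚ) = P.eval (k : ℚ) := by
    intro k hk
    have h1 : Stmt18Aux.Ek k N (wcsf G ω) =
        ∑ l : N.Partition, a l * Stmt18Aux.Ek k N (pp l.parts) := by
      rw [ha]
      unfold Stmt18Aux.Ek
      simp_rw [map_sum, LinearMap.map_smul, smul_eq_mul]
      rw [Finset.sum_comm]
      simp_rw [← Finset.mul_sum]
    have h2 : ∀ l : N.Partition, Stmt18Aux.Ek k N (pp l.parts) =
        (k : ℚ) ^ (Multiset.card l.parts) := by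
      intro l
      have := Stmt18Aux.Ek_pp k l.parts (fun m hm => l.parts_pos hm)
      rwa [l.parts_sum] at this
    have h3 : (basisPoly N a).eval (k : ℚ) =
        ∑ l : N.Partition, a l * (k : ℚ) ^ (Multiset.card l.parts) := by
      simp [basisPoly, Polynomial.eval_finset_sum]
    rw [h3, hP k hk, ← Stmt18Aux.Ek_wcsf G ω hω N hN k, h1]
    exact Finset.sum_congr rfl fun l _ => by rw [h2 l]
  have hsub : basisPoly N a - P = 0 := by
    apply Polynomial.eq_zero_of_infinite_isRoot
    have hinj : Function.Injective (fun k : ℕ => ((k + 1 : ℕ) : ℚ)) := by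
      intro a b hab
      simpa using hab
    refine (Set.infinite_range_of_injective hinj).mono ?_
    rintro x ⟨k, rfl⟩
    simp only [Set.mem_setOf_eq, Polynomial.IsRoot.def, Polynomial.eval_sub]
    rw [key (k + 1) k.succ_pos, sub_self]
  exact sub_eq_zero.mp hsub
end
end

section
/- Let (G,ω) be a weighted graph with n vertices and total weight N. Then (1) χ_G(x) = (x−1)^N · τ_{(G,ω)}(x/(x−1)), and (2) τ_{(G,ω)}(x) = (x−1)^N · χ_G(x/(x−1)), where χ_G is the chromatic polynomial of the underlying unweighted graph and τ_{(G,ω)} the tree polynomial of the weighted graph. -/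
open Polynomial

noncomputable section
open scoped Classical

namespace Stmt19
open Finset

def ev (N k : ℕ) (F : MvPowerSeries ℕ ℚ) : ℚ :=
  ∑ d ∈ (Finset.range k).finsuppAntidiag N, F d

def IsHom (p : ℕ) (F : MvPowerSeries ℕ ℚ) : Prop :=
  ∀ d : ℕ →₀ ℕ, F d ≠ 0 → d.sum (fun _ x => x) = p

theorem coeff_eq (d : ℕ →₀ ℕ) (F : MvPowerSeries ℕ ℚ) : MvPowerSeries.coeff d F = F d :=
  MvPowerSeries.coeff_apply (σ := ℕ) (R := ℚ) F d

theorem isHom_mul {p q : ℕ} {F G : MvPowerSeries ℕ ℚ} (hF : IsHom p F) (hG : IsHom q G) :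
    IsHom (p + q) (F * G) := by
  intro d hd
  have h : MvPowerSeries.coeff d (F * G) ≠ 0 := by rwa [coeff_eq]
  rw [MvPowerSeries.coeff_mul] at h
  obtain ⟨uv, huv, hne⟩ := Finset.exists_ne_zero_of_sum_ne_zero h
  rw [Finset.HasAntidiagonal.mem_antidiagonal] at huv
  have h1 : F uv.1 ≠ 0 := fun h => hne (by simp [coeff_eq, h])
  have h2 : G uv.2 ≠ 0 := fun h => hne (by simp [coeff_eq, h])
  rw [← huv, Finsupp.sum_add_index' (fun _ => rfl) (fun _ _ _ => rfl), hF _ h1, hG _ h2]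

theorem ev_mul {p q k : ℕ} {F G : MvPowerSeries ℕ ℚ} (hF : IsHom p F) (hG : IsHom q G) :
    ev (p + q) k (F * G) = ev p k F * ev q k G := by
  rw [ev, ev, ev, Finset.sum_mul_sum (f := fun d => F d) (g := fun d => G d), ← Finset.sum_product']
  have hco : ∀ d : ℕ →₀ ℕ, (F * G) d = ∑ uv ∈ Finset.HasAntidiagonal.antidiagonal d, F uv.1 * G uv.2 := by
    intro d
    exact MvPowerSeries.coeff_mul (R := ℚ) (n := d) (φ := F) (ψ := G)
  simp_rw [hco]
  rw [Finset.sum_sigma']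
  refine Finset.sum_bij_ne_zero (fun x _ _ => x.2) ?_ ?_ ?_ ?_
  · rintro ⟨d, u, v⟩ h₁ h₂
    simp only [Finset.mem_sigma, mem_finsuppAntidiag', Finset.HasAntidiagonal.mem_antidiagonal] at h₁
    obtain ⟨⟨hsum, hsupp⟩, huv⟩ := h₁
    have hu : F u ≠ 0 := fun h => h₂ (by simp [h])
    have hv : G v ≠ 0 := fun h => h₂ (by simp [h])
    have hus : u.support ⊆ Finset.range k := fun i hi => hsupp (by
      simp only [Finsupp.mem_support_iff] at hi ⊢
      intro h; rw [← huv] at h; simp only [Finsupp.add_apply] at h; omega)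
    have hvs : v.support ⊆ Finset.range k := fun i hi => hsupp (by
      simp only [Finsupp.mem_support_iff] at hi ⊢
      intro h; rw [← huv] at h; simp only [Finsupp.add_apply] at h; omega)
    simp only [Finset.mem_product, mem_finsuppAntidiag']
    exact ⟨⟨hF u hu, hus⟩, ⟨hG v hv, hvs⟩⟩
  · rintro ⟨d1, uv1⟩ h11 h12 ⟨d2, uv2⟩ h21 h22 heq
    simp only at heq
    simp only [Finset.mem_sigma, Finset.HasAntidiagonal.mem_antidiagonal] at h11 h21
    have : d1 = d2 := by rw [← h11.2, ← h21.2, heq]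
    subst this; subst heq; rfl
  · rintro ⟨u, v⟩ hmem hne
    simp only [Finset.mem_product, mem_finsuppAntidiag'] at hmem
    refine ⟨⟨u + v, (u, v)⟩, ?_, hne, rfl⟩
    simp only [Finset.mem_sigma, mem_finsuppAntidiag', Finset.HasAntidiagonal.mem_antidiagonal]
    refine ⟨⟨?_, ?_⟩, trivial⟩
    · rw [Finsupp.sum_add_index' (fun _ => rfl) (fun _ _ _ => rfl), hmem.1.1, hmem.2.1]
    · exact Finsupp.support_add.trans (Finset.union_subset hmem.1.2 hmem.2.2)
  · rintro ⟨d, u, v⟩ _ _; rfl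

theorem isHom_wcsf {V : Type} [Fintype V] (G : SimpleGraph V) (ω : V → ℕ) :
    IsHom (∑ v, ω v) (wcsf G ω) := by
  intro d hd
  have hne : Nonempty {κ : V → ℕ // (∀ u v, G.Adj u v → κ u ≠ κ v) ∧
      ∀ i : ℕ, ∑ v ∈ Finset.univ.filter (fun v => κ v = i), ω v = d i} := by
    by_contra h
    rw [not_nonempty_iff] at h
    exact hd (by simp [wcsf, Nat.card_of_isEmpty])
  obtain ⟨κ, hproper, hprof⟩ := hne.some
  classical
  set s : Finset ℕ := d.support ∪ Finset.univ.image κ with hs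
  have h1 : d.sum (fun _ x => x) = ∑ i ∈ s, d i := by
    apply Finsupp.sum_of_support_subset _ (Finset.subset_union_left) _ (fun _ _ => rfl)
  rw [h1]
  have h2 : ∀ i ∈ s, d i = ∑ v ∈ Finset.univ.filter (fun v => κ v = i), ω v :=
    fun i _ => (hprof i).symm
  rw [Finset.sum_congr rfl h2]
  exact Finset.sum_fiberwise_of_maps_to (fun v _ => Finset.mem_union_right _
    (Finset.mem_image_of_mem κ (Finset.mem_univ v))) ω

/-- profile of a `Fin k`-colouring -/
def prof {V : Type} [Fintype V] (ω : V → ℕ) {k : ℕ} (c : V → Fin k) : ℕ →₀ ℕ :=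
  ∑ v, Finsupp.single (c v : ℕ) (ω v)

theorem prof_apply {V : Type} [Fintype V] (ω : V → ℕ) {k : ℕ} (c : V → Fin k) (i : ℕ) :
    prof ω c i = ∑ v ∈ Finset.univ.filter (fun v => (c v : ℕ) = i), ω v := by
  rw [prof, Finset.sum_apply']
  rw [Finset.sum_filter]
  exact Finset.sum_congr rfl (fun v _ => Finsupp.single_apply)

theorem prof_mem {V : Type} [Fintype V] (ω : V → ℕ) {k N : ℕ} (hN : ∑ v, ω v = N)
    (c : V → Fin k) : prof ω c ∈ (Finset.range k).finsuppAntidiag N := by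
  rw [mem_finsuppAntidiag]
  constructor
  · rw [← hN]
    have : ∀ i ∈ Finset.range k, prof ω c i =
        ∑ v ∈ Finset.univ.filter (fun v => (c v : ℕ) = i), ω v := fun i _ => prof_apply ω c i
    rw [Finset.sum_congr rfl this]
    exact Finset.sum_fiberwise_of_maps_to (fun v _ => Finset.mem_range.mpr (c v).isLt) ω
  · refine (Finsupp.support_finset_sum).trans ?_
    intro i hi
    simp only [Finset.mem_biUnion] at hi
    obtain ⟨v, _, hv⟩ := hi
    have := Finsupp.support_single_subset hv
    simp only [Finset.mem_singleton] at this
    subst this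
    exact Finset.mem_range.mpr (c v).isLt

theorem ev_wcsf {V : Type} [Fintype V] (G : SimpleGraph V) (ω : V → ℕ) (hω : ∀ v, 0 < ω v)
    {N k : ℕ} (hN : ∑ v, ω v = N) :
    ev N k (wcsf G ω) =
      Nat.card {c : V → Fin k // ∀ u v, G.Adj u v → c u ≠ c v} := by
  classical
  have key : ∀ d ∈ (Finset.range k).finsuppAntidiag N,
      wcsf G ω d = ((Finset.univ.filter (fun c : V → Fin k =>
        (∀ u v, G.Adj u v → c u ≠ c v) ∧ prof ω c = d)).card : ℚ) := by
    intro d hd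
    rw [mem_finsuppAntidiag] at hd
    have hbound : ∀ (κ : V → ℕ), ((∀ u v, G.Adj u v → κ u ≠ κ v) ∧
        ∀ i : ℕ, ∑ v ∈ Finset.univ.filter (fun v => κ v = i), ω v = d i) → ∀ v, κ v < k := by
      intro κ ⟨_, hpr⟩ v
      have h1 : 0 < d (κ v) := by
        rw [← hpr (κ v)]
        exact Finset.sum_pos' (fun _ _ => Nat.zero_le _)
          ⟨v, Finset.mem_filter.mpr ⟨Finset.mem_univ v, rfl⟩, hω v⟩
      have : κ v ∈ d.support := Finsupp.mem_support_iff.mpr (by omega : d (κ v) ≠ 0)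
      exact Finset.mem_range.mp (hd.2 this)
    have e : {κ : V → ℕ // (∀ u v, G.Adj u v → κ u ≠ κ v) ∧
        ∀ i : ℕ, ∑ v ∈ Finset.univ.filter (fun v => κ v = i), ω v = d i} ≃
        {c : V → Fin k // (∀ u v, G.Adj u v → c u ≠ c v) ∧ prof ω c = d} := by
      refine
        { toFun := fun ⟨κ, hκ⟩ => ⟨fun v => ⟨κ v, hbound κ hκ v⟩, ?_, ?_⟩
          invFun := fun ⟨c, hc⟩ => ⟨fun v => (c v : ℕ), ?_, ?_⟩
          left_inv := fun ⟨κ, hκ⟩ => rfl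
          right_inv := fun ⟨c, hc⟩ => rfl }
      · intro u v huv h
        exact hκ.1 u v huv (congrArg Fin.val h)
      · ext i
        rw [prof_apply]
        exact hκ.2 i
      · intro u v huv h
        exact hc.1 u v huv (Fin.val_injective h)
      · intro i
        rw [← hc.2, prof_apply]
    rw [wcsf, Nat.card_congr e, Nat.card_eq_fintype_card, Fintype.card_subtype]
  rw [ev, Finset.sum_congr rfl key, ← Nat.cast_sum]
  rw [Nat.card_eq_fintype_card, Fintype.card_subtype]
  congr 1
  have := Finset.card_eq_sum_card_fiberwise
    (f := prof ω) (s := Finset.univ.filter (fun c : V → Fin k => ∀ u v, G.Adj u v → c u ≠ c v))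
    (t := (Finset.range k).finsuppAntidiag N)
    (fun c _ => prof_mem ω hN c)
  rw [this]
  refine Finset.sum_congr rfl (fun d _ => ?_)
  congr 1
  rw [Finset.filter_filter]

def properSet (m k : ℕ) : Finset (Fin m → Fin k) :=
  Finset.univ.filter (fun c => ∀ u v, (SimpleGraph.pathGraph m).Adj u v → c u ≠ c v)

theorem card_properSet (m k : ℕ) : (properSet (m + 1) k).card = k * (k - 1) ^ m := by
  induction m with
  | zero =>
    have h : properSet 1 k = Finset.univ := by
      rw [properSet, Finset.filter_true_of_mem]
      intro c _ u v huv
      rw [SimpleGraph.pathGraph_adj] at huv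
      omega
    rw [h, Finset.card_univ, Fintype.card_fun]
    simp
  | succ m ih =>
    have hmap : ∀ c ∈ properSet (m + 2) k, Fin.init c ∈ properSet (m + 1) k := by
      intro c hc
      rw [properSet, Finset.mem_filter] at hc ⊢
      refine ⟨Finset.mem_univ _, fun u v huv => ?_⟩
      have : (SimpleGraph.pathGraph (m + 2)).Adj u.castSucc v.castSucc := by
        rw [SimpleGraph.pathGraph_adj] at huv ⊢
        simpa using huv
      exact hc.2 _ _ this
    rw [Finset.card_eq_sum_card_fiberwise hmap]
    have hfib : ∀ c0 ∈ properSet (m + 1) k,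
        ((properSet (m + 2) k).filter (fun c => Fin.init c = c0)).card = k - 1 := by
      intro c0 hc0
      rw [properSet, Finset.mem_filter] at hc0
      have : ((Finset.univ : Finset (Fin k)).filter (fun x => x ≠ c0 (Fin.last m))).card
          = k - 1 := by
        rw [Finset.filter_ne', Finset.card_erase_of_mem (Finset.mem_univ _), Finset.card_univ,
          Fintype.card_fin]
      rw [← this]
      refine Finset.card_bij' (fun c _ => c (Fin.last (m + 1)))
        (fun x _ => Fin.snoc c0 x) ?_ ?_ ?_ ?_
      · intro c hc
        rw [Finset.mem_filter] at hc
        obtain ⟨hc1, hc2⟩ := hc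
        rw [properSet, Finset.mem_filter] at hc1
        simp only [Finset.mem_filter, Finset.mem_univ, true_and]
        have hadj : (SimpleGraph.pathGraph (m + 2)).Adj (Fin.last (m + 1))
            ((Fin.last m).castSucc) := by
          rw [SimpleGraph.pathGraph_adj]
          simp
        have := hc1.2 _ _ hadj
        rw [← hc2]
        simpa [Fin.init] using this
      · intro x hx
        simp only [Finset.mem_filter, Finset.mem_univ, true_and] at hx
        rw [Finset.mem_filter]
        constructor
        · rw [properSet, Finset.mem_filter]
          refine ⟨Finset.mem_univ _, fun u v huv => ?_⟩
          rw [SimpleGraph.pathGraph_adj] at huv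
          -- WLOG-style: handle both orders
          have main : ∀ i j : Fin (m + 2), i.val + 1 = j.val →
              Fin.snoc (α := fun _ => Fin k) c0 x i ≠ Fin.snoc (α := fun _ => Fin k) c0 x j := by
            clear huv
            intro u v huv
            rcases Fin.eq_castSucc_or_eq_last v with ⟨v', rfl⟩ | rfl
            · rcases Fin.eq_castSucc_or_eq_last u with ⟨u', rfl⟩ | rfl
              · rw [Fin.snoc_castSucc, Fin.snoc_castSucc]
                refine hc0.2 u' v' ?_
                rw [SimpleGraph.pathGraph_adj]
                left
                simpa using huv
              · exfalso
                simp only [Fin.val_last, Fin.coe_castSucc] at huv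
                omega
            · have hu : u = (Fin.last m).castSucc := by
                apply Fin.ext
                simp only [Fin.val_last] at huv
                simp only [Fin.coe_castSucc, Fin.val_last]
                omega
              subst hu
              rw [Fin.snoc_castSucc, Fin.snoc_last]
              exact fun h => hx h.symm
          rcases huv with h | h
          · exact main u v h
          · exact fun hh => (main v u h) hh.symm
        · exact funext (fun i => by rw [Fin.init_snoc])
      · intro c hc
        rw [Finset.mem_filter] at hc
        obtain ⟨h1, h2⟩ := hc
        subst h2
        exact Fin.snoc_init_self c
      · intro x hx
        exact Fin.snoc_last _ _
    rw [Finset.sum_congr rfl hfib, Finset.sum_const, ih, smul_eq_mul]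
    ring

def Phi (N : ℕ) (F : Polynomial ℚ) : Polynomial ℚ :=
  ∑ k ∈ Finset.range (N + 1),
    Polynomial.C (F.coeff k) * Polynomial.X ^ k * (Polynomial.X - 1) ^ (N - k)

theorem natDegree_term_le (c : ℚ) {j N : ℕ} (hj : j ≤ N) :
    (Polynomial.C c * Polynomial.X ^ j * (Polynomial.X - 1) ^ (N - j)).natDegree ≤ N := by
  refine (natDegree_mul_le).trans ?_
  have h1 : (Polynomial.C c * Polynomial.X ^ j : Polynomial ℚ).natDegree ≤ j := by
    refine (natDegree_mul_le).trans ?_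
    simp
  have h2 : ((Polynomial.X - 1 : Polynomial ℚ) ^ (N - j)).natDegree ≤ N - j := by
    have hd : (Polynomial.X - 1 : Polynomial ℚ).natDegree = 1 := by
      rw [show (1 : Polynomial ℚ) = Polynomial.C 1 by simp, natDegree_X_sub_C]
    have h3 := natDegree_pow_le (p := (Polynomial.X - 1 : Polynomial ℚ)) (n := N - j)
    rw [hd, mul_one] at h3
    exact h3
  omega

theorem natDegree_Phi_le (N : ℕ) (F : Polynomial ℚ) : (Phi N F).natDegree ≤ N := by
  refine Polynomial.natDegree_sum_le_of_forall_le _ _ (fun j hj => ?_)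
  exact natDegree_term_le _ (Nat.lt_succ_iff.mp (Finset.mem_range.mp hj))

theorem eval_Phi {N : ℕ} {F : Polynomial ℚ} (hF : F.natDegree ≤ N) {x : ℚ} (hx : x ≠ 1) :
    (Phi N F).eval x = (x - 1) ^ N * F.eval (x / (x - 1)) := by
  have h1 : x - 1 ≠ 0 := sub_ne_zero.mpr hx
  rw [Phi, eval_finset_sum, Polynomial.eval_eq_sum_range' (Nat.lt_succ_of_le hF), Finset.mul_sum]
  refine Finset.sum_congr rfl fun j hj => ?_
  have hjN : j ≤ N := Nat.lt_succ_iff.mp (Finset.mem_range.mp hj)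
  simp only [eval_mul, eval_pow, eval_C, eval_X, eval_sub, eval_one]
  have e : (x - 1) ^ N = (x - 1) ^ (N - j) * (x - 1) ^ j := by
    rw [← pow_add, Nat.sub_add_cancel hjN]
  rw [e, div_pow]
  field_simp

theorem poly_eq_of_ne_one (P Q : Polynomial ℚ) (h : ∀ x : ℚ, x ≠ 1 → P.eval x = Q.eval x) :
    P = Q := by
  refine Polynomial.eq_of_infinite_eval_eq _ _ ?_
  refine Set.Infinite.mono ?_ ((Set.finite_singleton (1 : ℚ)).infinite_compl)
  intro x hx
  exact h x hx

theorem poly_eq_of_nat (P Q : Polynomial ℚ) (h : ∀ k : ℕ, 0 < k → P.eval (k : ℚ) = Q.eval (k : ℚ)) :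
    P = Q := by
  refine Polynomial.eq_of_infinite_eval_eq _ _ ?_
  refine Set.infinite_of_injective_forall_mem (f := fun n : ℕ => ((n + 1 : ℕ) : ℚ)) ?_ ?_
  · intro a b hab
    simpa using hab
  · intro n
    exact h (n + 1) n.succ_pos

theorem Phi_invol {N : ℕ} {F : Polynomial ℚ} (hF : F.natDegree ≤ N) : Phi N (Phi N F) = F := by
  refine poly_eq_of_ne_one _ _ (fun x hx => ?_)
  have h1 : x - 1 ≠ 0 := sub_ne_zero.mpr hx
  have hy : x / (x - 1) ≠ 1 := by
    intro h
    rw [div_eq_one_iff_eq h1] at h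
    apply hx
    linarith
  rw [eval_Phi (natDegree_Phi_le N F) hx, eval_Phi hF hy]
  have e1 : x / (x - 1) - 1 = 1 / (x - 1) := by field_simp; ring
  rw [e1]
  have e2 : x / (x - 1) / (1 / (x - 1)) = x := by
    field_simp
  rw [e2, one_div, inv_pow, ← mul_assoc, mul_inv_cancel₀ (pow_ne_zero _ h1), one_mul]

theorem card_le_sum (μ : Multiset ℕ) (h : ∀ m ∈ μ, 0 < m) : Multiset.card μ ≤ μ.sum := by
  induction μ using Multiset.induction_on with
  | empty => simp
  | cons a s ih =>
    simp only [Multiset.card_cons, Multiset.sum_cons]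
    have h1 := h a (Multiset.mem_cons_self a s)
    have h2 := ih (fun m hm => h m (Multiset.mem_cons_of_mem hm))
    omega

theorem isHom_csf_path (m : ℕ) : IsHom m (csf (SimpleGraph.pathGraph m)) := by
  have := isHom_wcsf (SimpleGraph.pathGraph m) (fun _ => 1)
  simpa [csf] using this

theorem ev_csf_path (m k : ℕ) :
    ev (m + 1) k (csf (SimpleGraph.pathGraph (m + 1))) = ((k * (k - 1) ^ m : ℕ) : ℚ) := by
  have h := ev_wcsf (SimpleGraph.pathGraph (m + 1)) (fun _ => 1) (fun _ => one_pos)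
    (N := m + 1) (k := k) (by simp)
  rw [csf, h, Nat.card_eq_fintype_card, Fintype.card_subtype]
  rw [show (Finset.univ.filter fun c : Fin (m+1) → Fin k =>
      ∀ u v, (SimpleGraph.pathGraph (m+1)).Adj u v → c u ≠ c v) = properSet (m+1) k from rfl]
  rw [card_properSet]

theorem hom_ev_XP (μ : Multiset ℕ) (hpos : ∀ m ∈ μ, 0 < m) (k : ℕ) :
    IsHom μ.sum (XP μ) ∧
      ev μ.sum k (XP μ) = (((μ.map (fun m => k * (k - 1) ^ (m - 1))).prod : ℕ) : ℚ) := by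
  induction μ using Multiset.induction_on with
  | empty =>
    have hXP : XP 0 = 1 := by rw [XP, Multiset.map_zero, Multiset.prod_zero]
    constructor
    · intro d hd
      rw [hXP] at hd
      have h : MvPowerSeries.coeff d (1 : MvPowerSeries ℕ ℚ) ≠ 0 := hd
      rw [MvPowerSeries.coeff_one (R := ℚ)] at h
      have : d = 0 := by by_contra hc; simp [hc] at h
      simp [this]
    · rw [hXP]
      simp only [Multiset.sum_zero, Multiset.map_zero, Multiset.prod_zero, Nat.cast_one]
      rw [ev]
      have h1 : ∀ d : ℕ →₀ ℕ, (1 : MvPowerSeries ℕ ℚ) d = if d = 0 then 1 else 0 :=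
        fun d => MvPowerSeries.coeff_one (R := ℚ) (n := d)
      rw [Finset.sum_congr rfl (fun d _ => h1 d), Finset.sum_ite_eq' _ (0 : ℕ →₀ ℕ) (fun _ => (1:ℚ))]
      rw [if_pos]
      rw [mem_finsuppAntidiag']
      simp
  | cons a s ih =>
    obtain ⟨ih1, ih2⟩ := ih (fun m hm => hpos m (Multiset.mem_cons_of_mem hm))
    have ha : 0 < a := hpos a (Multiset.mem_cons_self a s)
    obtain ⟨a', rfl⟩ : ∃ a', a = a' + 1 := ⟨a - 1, by omega⟩
    have hXP : XP ((a' + 1) ::ₘ s) = csf (SimpleGraph.pathGraph (a' + 1)) * XP s := by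
      rw [XP, Multiset.map_cons, Multiset.prod_cons]; rfl
    have hsum : ((a' + 1) ::ₘ s).sum = (a' + 1) + s.sum := Multiset.sum_cons _ s
    constructor
    · rw [hXP, hsum]
      exact isHom_mul (isHom_csf_path (a' + 1)) ih1
    · rw [hXP, hsum, ev_mul (isHom_csf_path (a' + 1)) ih1, ev_csf_path, ih2,
        Multiset.map_cons, Multiset.prod_cons]
      push_cast
      ring

theorem prod_path_eval (μ : Multiset ℕ) (h : ∀ m ∈ μ, 0 < m) {k : ℕ} (hk : 0 < k) :
    (((μ.map (fun m => k * (k - 1) ^ (m - 1))).prod : ℕ) : ℚ) =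
      (k : ℚ) ^ (Multiset.card μ) * ((k : ℚ) - 1) ^ (μ.sum - Multiset.card μ) := by
  induction μ using Multiset.induction_on with
  | empty => simp
  | cons a s ih =>
    have ha : 0 < a := h a (Multiset.mem_cons_self a s)
    have hs : ∀ m ∈ s, 0 < m := fun m hm => h m (Multiset.mem_cons_of_mem hm)
    have hcs := card_le_sum s hs
    rw [Multiset.map_cons, Multiset.prod_cons, Multiset.card_cons, Multiset.sum_cons]
    push_cast [ih hs, Nat.cast_sub hk]
    have he : a - 1 + (s.sum - Multiset.card s) = a + s.sum - (Multiset.card s + 1) := by omega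
    rw [show (Multiset.card s + 1) = Multiset.card s + 1 from rfl, ← he, pow_add, pow_succ]
    ring

end Stmt19

/-- for a weighted graph `(G,ω)` with `n` vertices and total weight `N`,
with `τ_{(G,ω)}` the tree polynomial (from the path-basis expansion of `X_{(G,ω)}`) and
`χ_G` the chromatic polynomial of the underlying unweighted graph:
(1) `χ_G(x) = (x−1)^N τ_{(G,ω)}(x/(x−1))`, and
(2) `τ_{(G,ω)}(x) = (x−1)^N χ_G(x/(x−1))`,
interpreted as the polynomial identities
`χ_G = Σ_k [t^k]τ_{(G,ω)} · x^k (x−1)^{N−k}` and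
`τ_{(G,ω)} = Σ_k [t^k]χ_G · x^k (x−1)^{N−k}`. -/
theorem stmt_19 {V : Type} [Fintype V] (G : SimpleGraph V) (ω : V → ℕ)
    (hω : ∀ v, 0 < ω v) (n N : ℕ) (hn : Fintype.card V = n) (hN : ∑ v, ω v = N)
    (a : N.Partition → ℚ) (ha : wcsf G ω = ∑ l : N.Partition, a l • XP l.parts)
    (P : Polynomial ℚ) (hP : IsChromaticPoly G P) :
    P = ∑ k ∈ Finset.range (N + 1),
        Polynomial.C ((basisPoly N a).coeff k) * Polynomial.X ^ k *
          (Polynomial.X - 1) ^ (N - k) ∧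
    basisPoly N a = ∑ k ∈ Finset.range (N + 1),
        Polynomial.C (P.coeff k) * Polynomial.X ^ k * (Polynomial.X - 1) ^ (N - k) := by
  classical
  set T : Polynomial ℚ := basisPoly N a with hT
  have hl : ∀ l : N.Partition, l.parts.card ≤ N := by
    intro l
    have := Stmt19.card_le_sum l.parts (fun m hm => l.parts_pos hm)
    rwa [l.parts_sum] at this
  have hTdeg : T.natDegree ≤ N := by
    rw [hT, basisPoly]
    refine Polynomial.natDegree_sum_le_of_forall_le _ _ (fun l _ => ?_)
    exact (Polynomial.natDegree_C_mul_le _ _).trans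
      (le_of_eq_of_le (Polynomial.natDegree_X_pow _) (hl l))
  have hTcoeff : ∀ j, T.coeff j = ∑ l : N.Partition, if j = l.parts.card then a l else 0 := by
    intro j
    rw [hT, basisPoly, Polynomial.finset_sum_coeff]
    refine Finset.sum_congr rfl fun l _ => ?_
    rw [Polynomial.coeff_C_mul, Polynomial.coeff_X_pow]
    simp [mul_ite]
  have key : ∀ k : ℕ, 0 < k → P.eval (k : ℚ) = (Stmt19.Phi N T).eval (k : ℚ) := by
    intro k hk
    have hL : P.eval (k : ℚ) = Stmt19.ev N k (wcsf G ω) := by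
      rw [hP k hk, Stmt19.ev_wcsf G ω hω hN]
    have hev : Stmt19.ev N k (wcsf G ω) = ∑ l : N.Partition,
        a l * ((k : ℚ) ^ l.parts.card * ((k : ℚ) - 1) ^ (N - l.parts.card)) := by
      rw [ha, Stmt19.ev]
      have hpt : ∀ d : ℕ →₀ ℕ,
          (∑ l : N.Partition, a l • XP l.parts) d = ∑ l : N.Partition, a l * (XP l.parts) d := by
        intro d
        calc (∑ l : N.Partition, a l • XP l.parts) d
            = MvPowerSeries.coeff d (∑ l : N.Partition, a l • XP l.parts) := rfl
          _ = ∑ l : N.Partition, a l * (XP l.parts) d := by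
              rw [map_sum]
              exact Finset.sum_congr rfl fun l _ => by rw [map_smul, smul_eq_mul]; rfl
      rw [Finset.sum_congr rfl (fun d _ => hpt d), Finset.sum_comm]
      refine Finset.sum_congr rfl fun l _ => ?_
      rw [← Finset.mul_sum (f := fun x => XP l.parts x)]
      congr 1
      have h1 := (Stmt19.hom_ev_XP l.parts (fun m hm => l.parts_pos hm) k).2
      have h2 := Stmt19.prod_path_eval l.parts (fun m hm => l.parts_pos hm) hk
      rw [l.parts_sum] at h1 h2
      rw [show (∑ d ∈ (Finset.range k).finsuppAntidiag N, (XP l.parts) d)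
        = Stmt19.ev N k (XP l.parts) from rfl, h1, h2]
    have hR : (Stmt19.Phi N T).eval (k : ℚ) = ∑ l : N.Partition,
        a l * ((k : ℚ) ^ l.parts.card * ((k : ℚ) - 1) ^ (N - l.parts.card)) := by
      rw [Stmt19.Phi, Polynomial.eval_finset_sum]
      simp only [Polynomial.eval_mul, Polynomial.eval_pow, Polynomial.eval_C,
        Polynomial.eval_X, Polynomial.eval_sub, Polynomial.eval_one]
      rw [Finset.sum_congr rfl (fun j _ => by rw [hTcoeff j])]
      simp only [Finset.sum_mul, ite_mul, zero_mul]
      rw [Finset.sum_comm]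
      refine Finset.sum_congr rfl fun l _ => ?_
      rw [Finset.sum_ite_eq' (Finset.range (N + 1)) l.parts.card
        (fun j => a l * (k : ℚ) ^ j * ((k : ℚ) - 1) ^ (N - j))]
      rw [if_pos (Finset.mem_range.mpr (Nat.lt_succ_of_le (hl l)))]
      ring
    rw [hL, hev, hR]
  have h1 : P = Stmt19.Phi N T := Stmt19.poly_eq_of_nat _ _ key
  constructor
  · exact h1
  · rw [h1]
    exact (Stmt19.Phi_invol hTdeg).symm
end
end
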